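/- arXiv:1803.04705 — 3 statements merged into one kernel-verified Lean document; each statement's English description precedes it below -/
import Mathlib

section
/- Let φ : ℝⁿ → X be a non-constant almost periodic function into a complete metric space, let l(ε) denote the inclusion length of its set of ε-almost periods, and let δ*(ε) be the optimal modulus of uniform continuity (the supremum of δ such that d(φ(t₁),φ(t₂)) ≤ ε whenever ‖t₁−t₂‖_∞ ≤ δ). Then the hull H(φ) (the uniform closure of all translates φ(·+t)) can be covered by (l(ε)/δ*(ε) + 1)ⁿ open balls of radius 3ε in the uniform metric; in particular N_{3ε}(H(φ)) ≤ (l(ε)/δ*(ε) + 1)ⁿ, where N_r denotes the minimal number of open balls of radius r needed for a cover. -/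
noncomputable section

/-- `τ` is an `ε`-almost period of `φ`. -/
def IsAP {n : ℕ} {X : Type*} [PseudoMetricSpace X]
    (φ : (Fin n → ℝ) → X) (ε : ℝ) (τ : Fin n → ℝ) : Prop :=
  ∀ t, dist (φ (t + τ)) (φ t) ≤ ε

/-- The bcfTranslate `φ(· + t)` of a bounded continuous function. -/
def bcfTranslate {n : ℕ} {X : Type*} [MetricSpace X]
    (φ : BoundedContinuousFunction (Fin n → ℝ) X) (t : Fin n → ℝ) :
    BoundedContinuousFunction (Fin n → ℝ) X :=
  φ.compContinuous ((Homeomorph.addRight t : (Fin n → ℝ) ≃ₜ (Fin n → ℝ)) : C(Fin n → ℝ, Fin n → ℝ))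

/-- The hull of `φ`: the uniform closure of the set of its translates. -/
def hull {n : ℕ} {X : Type*} [MetricSpace X]
    (φ : BoundedContinuousFunction (Fin n → ℝ) X) :
    Set (BoundedContinuousFunction (Fin n → ℝ) X) :=
  closure (Set.range (bcfTranslate φ))

lemma bcfTranslate_apply {n : ℕ} {X : Type*} [MetricSpace X]
    (φ : BoundedContinuousFunction (Fin n → ℝ) X) (t u : Fin n → ℝ) :
    bcfTranslate φ t u = φ (u + t) := rfl

lemma dist_bcfTranslate_le {n : ℕ} {X : Type*} [MetricSpace X]
    (φ : BoundedContinuousFunction (Fin n → ℝ) X) (a b : Fin n → ℝ) {c : ℝ}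
    (hc : 0 ≤ c) (h : ∀ u, dist (φ (u + a)) (φ (u + b)) ≤ c) :
    dist (bcfTranslate φ a) (bcfTranslate φ b) ≤ c :=
  (BoundedContinuousFunction.dist_le hc).2 h

/-- The hull of an almost periodic function can be covered by
`(l(ε)/δ*(ε) + 1)^n` open balls of radius `3ε` centered at translates. -/
theorem hull_covering {n : ℕ} {X : Type*} [MetricSpace X]
    (φ : BoundedContinuousFunction (Fin n → ℝ) X)
    (hnc : ∃ t₁ t₂, φ t₁ ≠ φ t₂)
    (ε l δ : ℝ) (hε : 0 < ε) (hl : 0 ≤ l) (hδ : 0 < δ)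
    (hincl : ∀ a : Fin n → ℝ, ∃ τ, (∀ i, τ i ∈ Set.Icc (a i) (a i + l)) ∧
      IsAP (⇑φ) ε τ)
    (hmod : ∀ t₁ t₂ : Fin n → ℝ, ‖t₁ - t₂‖ ≤ δ → dist (φ t₁) (φ t₂) ≤ ε) :
    ∃ T : Finset (Fin n → ℝ), (T.card : ℝ) ≤ (l / δ + 1) ^ n ∧
      ∀ ψ ∈ hull φ, ∃ t ∈ T, dist ψ (bcfTranslate φ t) < 3 * ε := by
  set m : ℕ := ⌊l / δ⌋₊ + 1 with hm
  set S : Finset ℝ := Finset.image (fun k : ℕ => (k : ℝ) * δ) (Finset.range m) with hS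
  refine ⟨Fintype.piFinset (fun _ : Fin n => S), ?_, ?_⟩
  · have hSm : S.card ≤ m := (Finset.card_image_le).trans (by simp)
    have hcard : (Fintype.piFinset (fun _ : Fin n => S)).card ≤ m ^ n := by
      rw [Fintype.card_piFinset, Finset.prod_const, Finset.card_univ,
        Fintype.card_fin]
      exact Nat.pow_le_pow_left hSm n
    have hmle : (m : ℝ) ≤ l / δ + 1 := by
      push_cast [hm]
      have := Nat.floor_le (div_nonneg hl hδ.le) (R := ℝ) (a := l / δ)
      linarith
    calc ((Fintype.piFinset fun _ : Fin n => S).card : ℝ) ≤ (m : ℝ) ^ n := by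
          exact_mod_cast hcard
      _ ≤ (l / δ + 1) ^ n := pow_le_pow_left₀ (by positivity) hmle n
  · intro ψ hψ
    -- ψ is within ε of some translate
    obtain ⟨χ, hχ, hdχ⟩ := Metric.mem_closure_iff.1 hψ ε hε
    obtain ⟨s, rfl⟩ := hχ
    -- find an almost period τ with s + τ ∈ [0,l]^n
    obtain ⟨τ, hτmem, hτAP⟩ := hincl (-s)
    set tb : Fin n → ℝ := s + τ with htb
    have htbmem : ∀ i, tb i ∈ Set.Icc (0 : ℝ) l := by
      intro i
      have := hτmem i
      simp only [Set.mem_Icc, Pi.neg_apply] at this ⊢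
      constructor <;> simp [htb] <;> linarith [this.1, this.2]
    -- translate by tb is within ε of translate by s
    have h1 : dist (bcfTranslate φ s) (bcfTranslate φ tb) ≤ ε := by
      apply dist_bcfTranslate_le _ _ _ hε.le
      intro u
      have := hτAP (u + s)
      rw [dist_comm]
      convert this using 3
      simp [htb]; ring
    -- choose grid point g
    set g : Fin n → ℝ := fun i => (⌊tb i / δ⌋₊ : ℝ) * δ with hg
    have hgS : g ∈ Fintype.piFinset (fun _ : Fin n => S) := by
      rw [Fintype.mem_piFinset]
      intro i
      rw [hS, Finset.mem_image]
      refine ⟨⌊tb i / δ⌋₊, Finset.mem_range.2 ?_, rfl⟩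
      have hle : tb i / δ ≤ l / δ := by
        gcongr
        exact (htbmem i).2
      calc ⌊tb i / δ⌋₊ ≤ ⌊l / δ⌋₊ := Nat.floor_le_floor hle
        _ < m := by omega
    have hnear : ∀ i, |tb i - g i| ≤ δ := by
      intro i
      have h0 : 0 ≤ tb i / δ := div_nonneg (htbmem i).1 hδ.le
      have hf1 : (⌊tb i / δ⌋₊ : ℝ) * δ ≤ tb i :=
        calc (⌊tb i / δ⌋₊ : ℝ) * δ ≤ (tb i / δ) * δ :=
              mul_le_mul_of_nonneg_right (Nat.floor_le h0) hδ.le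
          _ = tb i := div_mul_cancel₀ _ hδ.ne'
      have hf2 : tb i < ((⌊tb i / δ⌋₊ : ℝ) + 1) * δ :=
        calc tb i = (tb i / δ) * δ := (div_mul_cancel₀ _ hδ.ne').symm
          _ < ((⌊tb i / δ⌋₊ : ℝ) + 1) * δ :=
              mul_lt_mul_of_pos_right (Nat.lt_floor_add_one _) hδ
      have hgi : g i = (⌊tb i / δ⌋₊ : ℝ) * δ := rfl
      rw [abs_le, hgi]
      constructor <;> nlinarith
    have hnorm : ‖tb - g‖ ≤ δ := by
      rw [pi_norm_le_iff_of_nonneg hδ.le]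
      intro i
      simpa [Real.norm_eq_abs] using hnear i
    have h2 : dist (bcfTranslate φ tb) (bcfTranslate φ g) ≤ ε := by
      apply dist_bcfTranslate_le _ _ _ hε.le
      intro u
      apply hmod
      have : u + tb - (u + g) = tb - g := by ring
      rw [this]; exact hnorm
    refine ⟨g, hgS, ?_⟩
    calc dist ψ (bcfTranslate φ g)
        ≤ dist ψ (bcfTranslate φ s) + dist (bcfTranslate φ s) (bcfTranslate φ tb)
          + dist (bcfTranslate φ tb) (bcfTranslate φ g) := dist_triangle4 _ _ _ _
      _ < 3 * ε := by linarith
end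
end

section
/- Let ω = (ω₁,…,ω_m) satisfy the Diophantine condition of order ν ≥ 0 with ν(m−1) < 1, and let (q_k) be a sequence of convergents satisfying (A1) |q_k ω|_m ≤ Ĉ q_{k+1}^(-1/m), (A2) q_{k+1} = O(q_k^(1+ν)) with partial quotients a_{k+1} = ⌊q_{k+1}/q_k⌋ = O(q_k^ν), and (A3) the tail-sum estimate. Then for every real number A there exists τ, a nonnegative-integer combination τ = Σ_{k=k₀}^K p_k q_k with 0 ≤ p_k ≤ a_{k+1} (or τ = 0, or the negative of such a sum), such that |τ − A| ≤ q_{k₀} and |τω|_m ≤ C₂ · k₀ / q_{k₀}^η, where η = (1 − ν(m−1))/m and C₂ depends only on ω. -/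
noncomputable section

/-- Sup-norm distance from a point of `ℝ^m` to the integer lattice `ℤ^m`. -/
def distZ {m : ℕ} (θ : Fin m → ℝ) : ℝ :=
  ⨅ p : Fin m → ℤ, ‖θ - fun i => (p i : ℝ)‖

/-- `ω` satisfies the Diophantine condition of order `ν` with constant `C_d`. -/
def DioCond (m : ℕ) (ω : Fin m → ℝ) (ν C_d : ℝ) : Prop :=
  ∀ q : ℕ, 1 ≤ q → C_d * (q : ℝ) ^ (-(1 + ν) / m) ≤ distZ (fun i => (q : ℝ) * ω i)

namespace OstAux

variable {m : ℕ}

lemma distZ_bddBelow (θ : Fin m → ℝ) :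
    BddBelow (Set.range fun p : Fin m → ℤ => ‖θ - fun i => (p i : ℝ)‖) := by
  refine ⟨0, ?_⟩
  rintro y ⟨p, rfl⟩
  exact norm_nonneg _

lemma distZ_nonneg (θ : Fin m → ℝ) : 0 ≤ distZ θ :=
  Real.iInf_nonneg fun p => norm_nonneg _

lemma distZ_le (θ : Fin m → ℝ) (p : Fin m → ℤ) :
    distZ θ ≤ ‖θ - fun i => (p i : ℝ)‖ :=
  ciInf_le (distZ_bddBelow θ) p

lemma distZ_add_le (θ₁ θ₂ : Fin m → ℝ) :
    distZ (θ₁ + θ₂) ≤ distZ θ₁ + distZ θ₂ := by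
  refine le_of_forall_pos_le_add fun ε hε => ?_
  obtain ⟨p₁, hp₁⟩ := exists_lt_of_ciInf_lt
    (show distZ θ₁ < distZ θ₁ + ε / 2 by linarith)
  obtain ⟨p₂, hp₂⟩ := exists_lt_of_ciInf_lt
    (show distZ θ₂ < distZ θ₂ + ε / 2 by linarith)
  have h1 : distZ (θ₁ + θ₂) ≤ ‖(θ₁ + θ₂) - fun i => ((p₁ i + p₂ i : ℤ) : ℝ)‖ :=
    distZ_le _ _
  have h2 : ((θ₁ + θ₂) - fun i => ((p₁ i + p₂ i : ℤ) : ℝ)) =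
      (θ₁ - fun i => (p₁ i : ℝ)) + (θ₂ - fun i => (p₂ i : ℝ)) := by
    funext i
    simp only [Pi.add_apply, Pi.sub_apply]
    push_cast
    ring
  rw [h2] at h1
  calc distZ (θ₁ + θ₂) ≤ _ := h1
    _ ≤ ‖θ₁ - fun i => (p₁ i : ℝ)‖ + ‖θ₂ - fun i => (p₂ i : ℝ)‖ := norm_add_le _ _
    _ ≤ (distZ θ₁ + ε / 2) + (distZ θ₂ + ε / 2) := add_le_add hp₁.le hp₂.le
    _ = distZ θ₁ + distZ θ₂ + ε := by ring

lemma distZ_zero : distZ (fun _ : Fin m => (0 : ℝ)) = 0 := by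
  refine le_antisymm ?_ (distZ_nonneg _)
  have := distZ_le (fun _ : Fin m => (0 : ℝ)) 0
  simpa using this

lemma distZ_neg (θ : Fin m → ℝ) : distZ (fun i => -(θ i)) = distZ θ := by
  have key : ∀ (θ : Fin m → ℝ), distZ (fun i => -(θ i)) ≤ distZ θ := by
    intro θ
    refine le_ciInf fun p => ?_
    have h := distZ_le (fun i => -(θ i)) (fun i => -(p i))
    have h2 : ((fun i => -(θ i)) - fun i => ((-(p i) : ℤ) : ℝ)) =
        -(θ - fun i => (p i : ℝ)) := by
      funext i; simp; ring
    rw [h2, norm_neg] at h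
    exact h
  refine le_antisymm (key θ) ?_
  have := key (fun i => -(θ i))
  simpa using this

lemma distZ_le_half (θ : Fin m → ℝ) : distZ θ ≤ 1 / 2 := by
  refine (distZ_le θ (fun i => round (θ i))).trans ?_
  rw [pi_norm_le_iff_of_nonneg (by norm_num)]
  intro i
  simp only [Pi.sub_apply, Real.norm_eq_abs]
  exact abs_sub_round (θ i)

/-- distance of `n·ω` to the lattice -/
def Dn (ω : Fin m → ℝ) (n : ℕ) : ℝ := distZ (fun i => (n : ℝ) * ω i)

lemma Dn_nonneg (ω : Fin m → ℝ) (n : ℕ) : 0 ≤ Dn ω n := distZ_nonneg _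

lemma Dn_zero (ω : Fin m → ℝ) : Dn ω 0 = 0 := by
  have : (fun i => ((0 : ℕ) : ℝ) * ω i) = fun _ : Fin m => (0 : ℝ) := by
    funext i; simp
  rw [Dn, this, distZ_zero]

lemma Dn_add (ω : Fin m → ℝ) (a b : ℕ) : Dn ω (a + b) ≤ Dn ω a + Dn ω b := by
  have h : (fun i => ((a + b : ℕ) : ℝ) * ω i) =
      (fun i => (a : ℝ) * ω i) + fun i => (b : ℝ) * ω i := by
    funext i; simp only [Pi.add_apply]; push_cast; ring
  rw [Dn, h]
  exact distZ_add_le _ _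

lemma Dn_mul (ω : Fin m → ℝ) (a b : ℕ) : Dn ω (a * b) ≤ (a : ℝ) * Dn ω b := by
  induction a with
  | zero => simp [Dn_zero]
  | succ n ih =>
      have h1 : (n + 1) * b = n * b + b := by ring
      have h2 := Dn_add ω (n * b) b
      rw [h1]
      push_cast
      nlinarith [Dn_nonneg ω b]

lemma ranti {η u v : ℝ} (hη : 0 < η) (hu : 0 < u) (huv : u ≤ v) :
    v ^ (-η) ≤ u ^ (-η) := by
  have hv : 0 < v := lt_of_lt_of_le hu huv
  rw [Real.rpow_neg hu.le, Real.rpow_neg hv.le]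
  exact inv_anti₀ (Real.rpow_pos_of_pos hu η) (Real.rpow_le_rpow hu.le huv hη.le)

/-- index of first `q k` exceeding `x` -/
def greF (q : ℕ → ℕ) (hub : ∀ M : ℕ, ∃ k, M < q k) (x : ℕ) : ℕ := Nat.find (hub x)

lemma greF_facts (q : ℕ → ℕ) (hmono : Monotone q) (hub : ∀ M : ℕ, ∃ k, M < q k)
    (k₀ x : ℕ) (hx : q k₀ ≤ x) :
    k₀ ≤ greF q hub x - 1 ∧ q (greF q hub x - 1) ≤ x ∧
      x < q (greF q hub x - 1 + 1) ∧ k₀ < greF q hub x := by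
  have h1 : k₀ < Nat.find (hub x) := by
    rw [Nat.lt_find_iff]
    intro j hj
    exact not_lt.mpr ((hmono hj).trans hx)
  have hsucc : greF q hub x - 1 + 1 = greF q hub x := by
    have : k₀ < greF q hub x := h1
    omega
  refine ⟨by unfold greF; omega, ?_, ?_, h1⟩
  · have := Nat.find_min (hub x) (m := greF q hub x - 1) (by unfold greF at *; omega)
    exact not_lt.mp this
  · rw [hsucc]
    exact Nat.find_spec (hub x)

/-- greedy representation of `x` in base `q`, using levels `≥ k₀` -/
def gre (q : ℕ → ℕ) (hq1 : ∀ k, 1 ≤ q k) (hmono : Monotone q)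
    (hub : ∀ M : ℕ, ∃ k, M < q k) (k₀ : ℕ) : ℕ → ℕ
  | x =>
    if h : x < q k₀ then 0
    else
      have hfacts := greF_facts q hmono hub k₀ x (not_lt.mp h)
      have hdec : x % q (greF q hub x - 1) < x :=
        lt_of_lt_of_le (Nat.mod_lt _ (hq1 _)) hfacts.2.1
      q (greF q hub x - 1) * (x / q (greF q hub x - 1)) +
        gre q hq1 hmono hub k₀ (x % q (greF q hub x - 1))
  termination_by x => x

variable (q : ℕ → ℕ) (hq1 : ∀ k, 1 ≤ q k) (hmono : Monotone q)
    (hub : ∀ M : ℕ, ∃ k, M < q k) (k₀ : ℕ)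

lemma gre_lo (x : ℕ) (h : x < q k₀) : gre q hq1 hmono hub k₀ x = 0 := by
  rw [gre]; simp [h]

lemma gre_hi (x : ℕ) (h : q k₀ ≤ x) :
    gre q hq1 hmono hub k₀ x =
      q (greF q hub x - 1) * (x / q (greF q hub x - 1)) +
        gre q hq1 hmono hub k₀ (x % q (greF q hub x - 1)) := by
  rw [gre]; simp [not_lt.mpr h]

lemma gre_rem : ∀ x : ℕ, ∃ r : ℕ, x = gre q hq1 hmono hub k₀ x + r ∧ r < q k₀ := by
  intro x
  induction x using Nat.strong_induction_on with
  | _ x ih =>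
    by_cases h : x < q k₀
    · exact ⟨x, by rw [gre_lo q hq1 hmono hub k₀ x h]; omega, h⟩
    · have hfacts := greF_facts q hmono hub k₀ x (not_lt.mp h)
      have hdec : x % q (greF q hub x - 1) < x :=
        lt_of_lt_of_le (Nat.mod_lt _ (hq1 _)) hfacts.2.1
      obtain ⟨r, hr, hrlt⟩ := ih (x % q (greF q hub x - 1)) hdec
      refine ⟨r, ?_, hrlt⟩
      rw [gre_hi q hq1 hmono hub k₀ x (not_lt.mp h)]
      have := Nat.div_add_mod x (q (greF q hub x - 1))
      omega

/-- the greedy value is a capped digit expansion -/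
lemma gre_rep : ∀ x : ℕ, ∃ p : ℕ → ℕ,
    (∀ k, p k ≤ q (k + 1) / q k) ∧
    (∀ k, greF q hub x ≤ k → p k = 0) ∧
    (∀ K', greF q hub x - 1 ≤ K' →
      gre q hq1 hmono hub k₀ x = ∑ k ∈ Finset.Icc k₀ K', p k * q k) := by
  intro x
  induction x using Nat.strong_induction_on with
  | _ x ih =>
    by_cases h : x < q k₀
    · refine ⟨fun _ => 0, fun k => Nat.zero_le _, fun _ _ => rfl, fun K' _ => ?_⟩
      rw [gre_lo q hq1 hmono hub k₀ x h]
      simp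
    · have hx := not_lt.mp h
      obtain ⟨hk₀K, hKx, hxK1, hk₀F⟩ := greF_facts q hmono hub k₀ x hx
      set K := greF q hub x - 1 with hKdef
      set s := x % q K with hsdef
      have hdec : s < x := lt_of_lt_of_le (Nat.mod_lt _ (hq1 _)) hKx
      obtain ⟨ps, hps_cap, hps_supp, hps_sum⟩ := ih s hdec
      have hFsK : greF q hub s ≤ K := by
        apply Nat.find_le
        exact Nat.mod_lt _ (hq1 _)
      have hpsK : ps K = 0 := hps_supp K hFsK
      refine ⟨fun k => (if k = K then x / q K else 0) + ps k, ?_, ?_, ?_⟩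
      · intro k
        by_cases hk : k = K
        · subst hk
          simp [hpsK]
          exact Nat.div_le_div_right (le_of_lt hxK1)
        · simp [hk]
          exact hps_cap k
      · intro k hk
        have hkK : k ≠ K := by
          have : K < greF q hub x := by omega
          omega
        have : ps k = 0 := hps_supp k (le_trans hFsK (by omega))
        simp [hkK, this]
      · intro K' hK'
        rw [gre_hi q hq1 hmono hub k₀ x hx]
        have hsum := hps_sum K' (le_trans (by omega) hK')
        rw [← hKdef, ← hsdef]
        have hsplit : ∑ k ∈ Finset.Icc k₀ K',
            ((if k = K then x / q K else 0) + ps k) * q k =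
            (∑ k ∈ Finset.Icc k₀ K', (if k = K then x / q K * q k else 0)) +
            ∑ k ∈ Finset.Icc k₀ K', ps k * q k := by
          rw [← Finset.sum_add_distrib]
          apply Finset.sum_congr rfl
          intro k _
          by_cases hk : k = K <;> simp [hk, add_mul]
        rw [hsplit, ← hsum]
        have hKmem : K ∈ Finset.Icc k₀ K' := by
          rw [Finset.mem_Icc]
          exact ⟨hk₀K, by omega⟩
        rw [Finset.sum_ite_eq' (Finset.Icc k₀ K') K (fun k => x / q K * q k)]
        simp [hKmem, mul_comm]

lemma gre_bound (D : ℕ → ℝ) (hD0 : D 0 = 0)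
    (hDadd : ∀ a b, D (a + b) ≤ D a + D b)
    (hDmul : ∀ a b, D (a * b) ≤ (a : ℝ) * D b)
    (η C₁ C₉ : ℝ) (hη : 0 < η) (hC₁ : 0 ≤ C₁) (hC₉ : 0 ≤ C₉)
    (hC₉' : C₁ * (1 + (2:ℝ) ^ (-η)) ≤ C₉ * (1 - (2:ℝ) ^ (-η)))
    (hterm : ∀ x K : ℕ, k₀ ≤ K → q K ≤ x → x < q (K + 1) →
      ((x / q K : ℕ) : ℝ) * D (q K) ≤ C₁ * (q K : ℝ) ^ (-η)) :
    ∀ x, q k₀ ≤ x → D (gre q hq1 hmono hub k₀ x) ≤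
      (2 * C₁ + C₉) * (q k₀ : ℝ) ^ (-η) - C₉ * (x : ℝ) ^ (-η) := by
  intro x
  induction x using Nat.strong_induction_on with
  | _ x ih =>
    intro hx
    have hq : ∀ k, (0:ℝ) < q k := fun k => by exact_mod_cast hq1 k
    obtain ⟨hk₀K, hKx, hxK1, hk₀F⟩ := greF_facts q hmono hub k₀ x hx
    set K := greF q hub x - 1 with hKdef
    set s := x % q K with hsdef
    have hsqK : s < q K := Nat.mod_lt _ (hq1 _)
    have hsx : s < x := lt_of_lt_of_le hsqK hKx
    have step : ∀ y KK : ℕ, k₀ ≤ KK → q KK ≤ y → y < q (KK + 1) →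
        D (q KK * (y / q KK)) ≤ C₁ * (q KK : ℝ) ^ (-η) := by
      intro y KK h1 h2 h3
      calc D (q KK * (y / q KK)) = D ((y / q KK) * q KK) := by rw [mul_comm]
        _ ≤ ((y / q KK : ℕ) : ℝ) * D (q KK) := hDmul _ _
        _ ≤ C₁ * (q KK : ℝ) ^ (-η) := hterm y KK h1 h2 h3
    have hDx : D (gre q hq1 hmono hub k₀ x) ≤
        C₁ * (q K : ℝ) ^ (-η) + D (gre q hq1 hmono hub k₀ s) := by
      rw [gre_hi q hq1 hmono hub k₀ x hx]
      exact (hDadd _ _).trans (add_le_add (step x K hk₀K hKx hxK1) le_rfl)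
    have hQx : (x : ℝ) ^ (-η) ≤ (q k₀ : ℝ) ^ (-η) :=
      ranti hη (hq k₀) (by exact_mod_cast hx)
    have hQK : (q K : ℝ) ^ (-η) ≤ (q k₀ : ℝ) ^ (-η) :=
      ranti hη (hq k₀) (by exact_mod_cast hmono hk₀K)
    by_cases hs : s < q k₀
    · rw [gre_lo q hq1 hmono hub k₀ s hs, hD0] at hDx
      nlinarith [Real.rpow_nonneg (le_of_lt (hq k₀)) (-η)]
    · have hs' : q k₀ ≤ s := not_lt.mp hs
      obtain ⟨hk₀K', hK's, hsK'1, hk₀F'⟩ := greF_facts q hmono hub k₀ s hs'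
      set K' := greF q hub s - 1 with hK'def
      set t := s % q K' with htdef
      have htqK' : t < q K' := Nat.mod_lt _ (hq1 _)
      have hts : t < s := lt_of_lt_of_le htqK' hK's
      have hDs : D (gre q hq1 hmono hub k₀ s) ≤
          C₁ * (q K' : ℝ) ^ (-η) + D (gre q hq1 hmono hub k₀ t) := by
        rw [gre_hi q hq1 hmono hub k₀ s hs']
        exact (hDadd _ _).trans (add_le_add (step s K' hk₀K' hK's hsK'1) le_rfl)
      have hQK' : (q K' : ℝ) ^ (-η) ≤ (q k₀ : ℝ) ^ (-η) :=
        ranti hη (hq k₀) (by exact_mod_cast hmono hk₀K')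
      by_cases ht : t < q k₀
      · rw [gre_lo q hq1 hmono hub k₀ t ht, hD0] at hDs
        nlinarith [Real.rpow_nonneg (le_of_lt (hq k₀)) (-η)]
      · have ht' : q k₀ ≤ t := not_lt.mp ht
        have ihs := ih t (lt_trans hts hsx) ht'
        have ht1 : (0:ℝ) < t := lt_of_lt_of_le (hq k₀) (by exact_mod_cast ht')
        have h2t : 2 * t < q K := by
          have h1 : t ≤ s - q K' := by
            have hdiv : 1 ≤ s / q K' := (Nat.one_le_div_iff (hq1 _)).mpr hK's
            have hmd := Nat.div_add_mod s (q K')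
            have : q K' ≤ q K' * (s / q K') := by
              calc q K' = q K' * 1 := (mul_one _).symm
                _ ≤ q K' * (s / q K') := Nat.mul_le_mul_left _ hdiv
            omega
          omega
        have f1 : (q K' : ℝ) ^ (-η) ≤ (t : ℝ) ^ (-η) :=
          ranti hη ht1 (by exact_mod_cast htqK'.le)
        have f2 : (q K : ℝ) ^ (-η) ≤ (2:ℝ) ^ (-η) * (t : ℝ) ^ (-η) := by
          have h1 : ((2 * t : ℕ) : ℝ) ^ (-η) = (2:ℝ) ^ (-η) * (t : ℝ) ^ (-η) := by
            push_cast
            rw [Real.mul_rpow (by norm_num) (le_of_lt ht1)]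
          rw [← h1]
          have ht0 : 0 < 2 * t := by
            have := lt_of_lt_of_le (hq1 k₀) ht'
            omega
          refine ranti hη (by exact_mod_cast ht0) ?_
          exact_mod_cast h2t.le
        have f3 : (x : ℝ) ^ (-η) ≤ (q K : ℝ) ^ (-η) :=
          ranti hη (hq K) (by exact_mod_cast hKx)
        have hT : (0:ℝ) ≤ (t : ℝ) ^ (-η) := Real.rpow_nonneg ht1.le _
        have hmul : C₁ * (1 + (2:ℝ) ^ (-η)) * ((t : ℝ) ^ (-η)) ≤
            C₉ * (1 - (2:ℝ) ^ (-η)) * ((t : ℝ) ^ (-η)) :=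
          mul_le_mul_of_nonneg_right hC₉' hT
        have g2 : C₁ * (q K : ℝ) ^ (-η) ≤ C₁ * ((2:ℝ) ^ (-η) * (t : ℝ) ^ (-η)) :=
          mul_le_mul_of_nonneg_left f2 hC₁
        have g1 : C₁ * (q K' : ℝ) ^ (-η) ≤ C₁ * (t : ℝ) ^ (-η) :=
          mul_le_mul_of_nonneg_left f1 hC₁
        have g3 : C₉ * (x : ℝ) ^ (-η) ≤ C₉ * ((2:ℝ) ^ (-η) * (t : ℝ) ^ (-η)) :=
          mul_le_mul_of_nonneg_left (f3.trans f2) hC₉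
        linarith

lemma term_bound (m : ℕ) (hm : 0 < m) (ν Chat C' : ℝ)
    (hChat : 0 < Chat) (hC' : 0 < C')
    (hq1 : ∀ k, 1 ≤ q k) (hmono : Monotone q)
    (D : ℕ → ℝ) (hDnn : ∀ n, 0 ≤ D n)
    (hA1' : ∀ k, D (q k) ≤ Chat * (q (k + 1) : ℝ) ^ (-(1 : ℝ) / m))
    (hA2b : ∀ k, ((q (k + 1) / q k : ℕ) : ℝ) ≤ C' * (q k : ℝ) ^ ν)
    (x K : ℕ) (h2 : x < q (K + 1)) :
    ((x / q K : ℕ) : ℝ) * D (q K) ≤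
      (Chat * C' ^ (1 - 1 / (m : ℝ))) * (q K : ℝ) ^ (-((1 - ν * ((m:ℝ) - 1)) / m)) := by
  have hmR : (0:ℝ) < m := by exact_mod_cast hm
  have hm1 : (1:ℝ) ≤ m := by exact_mod_cast hm
  have hqK : (0:ℝ) < q K := by exact_mod_cast hq1 K
  set a := q (K + 1) / q K with hadef
  have ha1 : 1 ≤ a := (Nat.one_le_div_iff (hq1 K)).mpr (hmono (Nat.le_succ K))
  have haR : (1:ℝ) ≤ a := by exact_mod_cast ha1
  have haq : a * q K ≤ q (K + 1) := by
    rw [hadef]; exact Nat.div_mul_le_self _ _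
  have hta : x / q K ≤ a := Nat.div_le_div_right (le_of_lt h2)
  have hμ : (0:ℝ) ≤ 1 - 1 / (m:ℝ) := by
    have : 1 / (m:ℝ) ≤ 1 := by
      rw [div_le_one hmR]; exact hm1
    linarith
  have hinvm : (0:ℝ) < 1 / m := by positivity
  have s1 : ((x / q K : ℕ) : ℝ) * D (q K) ≤
      (a : ℝ) * (Chat * (q (K + 1) : ℝ) ^ (-(1 : ℝ) / m)) := by
    apply mul_le_mul (by exact_mod_cast hta) (hA1' K) (hDnn _) (by positivity)
  have s2 : (q (K + 1) : ℝ) ^ (-(1 : ℝ) / m) ≤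
      ((a : ℝ) * (q K : ℝ)) ^ (-(1 / (m:ℝ))) := by
    have e : (-(1 : ℝ) / m) = -(1 / (m:ℝ)) := by ring
    rw [e]
    refine ranti hinvm (by positivity) ?_
    calc (a:ℝ) * (q K : ℝ) = ((a * q K : ℕ) : ℝ) := by push_cast; ring
      _ ≤ (q (K+1) : ℝ) := by exact_mod_cast haq
  have s3 : ((a : ℝ) * (q K : ℝ)) ^ (-(1 / (m:ℝ))) =
      (a : ℝ) ^ (-(1 / (m:ℝ))) * (q K : ℝ) ^ (-(1 / (m:ℝ))) :=
    Real.mul_rpow (by positivity) hqK.le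
  have s4 : (a:ℝ) * (a : ℝ) ^ (-(1 / (m:ℝ))) = (a:ℝ) ^ (1 - 1 / (m:ℝ)) := by
    have ha0 : (0:ℝ) < a := by linarith
    rw [show (1:ℝ) - 1/(m:ℝ) = 1 + (-(1/(m:ℝ))) by ring, Real.rpow_add ha0,
      Real.rpow_one]
  have s5 : (a:ℝ) ^ (1 - 1 / (m:ℝ)) ≤ (C' * (q K : ℝ) ^ ν) ^ (1 - 1 / (m:ℝ)) :=
    Real.rpow_le_rpow (by positivity) (by rw [hadef]; exact hA2b K) hμ
  have s6 : (C' * (q K : ℝ) ^ ν) ^ (1 - 1 / (m:ℝ)) =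
      C' ^ (1 - 1 / (m:ℝ)) * (q K : ℝ) ^ (ν * (1 - 1 / (m:ℝ))) := by
    rw [Real.mul_rpow hC'.le (by positivity)]
    congr 1
    rw [← Real.rpow_mul hqK.le]
  have s7 : (q K : ℝ) ^ (ν * (1 - 1 / (m:ℝ))) * (q K : ℝ) ^ (-(1 / (m:ℝ))) =
      (q K : ℝ) ^ (-((1 - ν * ((m:ℝ) - 1)) / m)) := by
    rw [← Real.rpow_add hqK]
    congr 1
    field_simp
    ring
  calc ((x / q K : ℕ) : ℝ) * D (q K) ≤
      (a : ℝ) * (Chat * (q (K + 1) : ℝ) ^ (-(1 : ℝ) / m)) := s1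
    _ ≤ (a : ℝ) * (Chat * ((a : ℝ) * (q K : ℝ)) ^ (-(1 / (m:ℝ)))) := by
        apply mul_le_mul_of_nonneg_left _ (by positivity)
        exact mul_le_mul_of_nonneg_left s2 hChat.le
    _ = Chat * (((a:ℝ) * (a : ℝ) ^ (-(1 / (m:ℝ)))) * (q K : ℝ) ^ (-(1 / (m:ℝ)))) := by
        rw [s3]; ring
    _ = Chat * ((a:ℝ) ^ (1 - 1 / (m:ℝ)) * (q K : ℝ) ^ (-(1 / (m:ℝ)))) := by rw [s4]
    _ ≤ Chat * ((C' * (q K : ℝ) ^ ν) ^ (1 - 1 / (m:ℝ)) * (q K : ℝ) ^ (-(1 / (m:ℝ)))) := by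
        apply mul_le_mul_of_nonneg_left _ hChat.le
        exact mul_le_mul_of_nonneg_right s5 (by positivity)
    _ = (Chat * C' ^ (1 - 1 / (m : ℝ))) *
        ((q K : ℝ) ^ (ν * (1 - 1 / (m:ℝ))) * (q K : ℝ) ^ (-(1 / (m:ℝ)))) := by
        rw [s6]; ring
    _ = (Chat * C' ^ (1 - 1 / (m : ℝ))) * (q K : ℝ) ^ (-((1 - ν * ((m:ℝ) - 1)) / m)) := by
        rw [s7]

end OstAux
/-- Greedy Ostrowski-type representation: every real `A` is within `q_{k₀}`
of a signed combination `τ = ±Σ_{k=k₀}^K p_k q_k` with `0 ≤ p_k ≤ a_{k+1}`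
(or `τ = 0`), and `|τω|_m ≤ C₂ k₀ / q_{k₀}^η` with `η = (1 − ν(m−1))/m`. -/
theorem ostrowski_representation (m : ℕ) (hm : 0 < m) (ω : Fin m → ℝ)
    (ν C_d : ℝ) (hν : 0 ≤ ν) (hνm : ν * (m - 1) < 1) (hC : 0 < C_d)
    (hdio : DioCond m ω ν C_d)
    (q : ℕ → ℕ) (hq1 : ∀ k, 1 ≤ q k) (hqmono : Monotone q)
    (Chat : ℝ) (hChat : 0 < Chat)
    (hA1 : ∀ k, distZ (fun i => (q k : ℝ) * ω i) ≤
      Chat * (q (k + 1) : ℝ) ^ (-(1 : ℝ) / m))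
    (hA2 : ∃ C' : ℝ, 0 < C' ∧ ∀ k,
      (q (k + 1) : ℝ) ≤ C' * (q k : ℝ) ^ ((1 : ℝ) + ν) ∧
      ((q (k + 1) / q k : ℕ) : ℝ) ≤ C' * (q k : ℝ) ^ ν)
    (hA3 : ∀ η' : ℝ, 0 < η' → ∃ Cη : ℝ, 0 < Cη ∧ ∀ N : ℕ, 1 ≤ N →
      (∑' k : ℕ, ((q (N + k) : ℝ)) ^ (-η')) ≤ Cη * N / (q N : ℝ) ^ η') :
    ∃ C₂ : ℝ, 0 < C₂ ∧ ∃ K₀ : ℕ, ∀ k₀ : ℕ, K₀ ≤ k₀ → ∀ A : ℝ, ∃ τ : ℝ,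
      (τ = 0 ∨ ∃ K : ℕ, ∃ p : ℕ → ℕ,
        (∀ k, k₀ ≤ k → k ≤ K → p k ≤ q (k + 1) / q k) ∧
        (τ = ∑ k ∈ Finset.Icc k₀ K, ((p k : ℝ) * (q k : ℝ)) ∨
         τ = -∑ k ∈ Finset.Icc k₀ K, ((p k : ℝ) * (q k : ℝ)))) ∧
      |τ - A| ≤ (q k₀ : ℝ) ∧
      distZ (fun i => τ * ω i) ≤
        C₂ * k₀ / (q k₀ : ℝ) ^ ((1 - ν * (m - 1)) / m) := by
  classical
  obtain ⟨C', hC', hA2'⟩ := hA2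
  have hmR : (0:ℝ) < m := by exact_mod_cast hm
  set η : ℝ := (1 - ν * ((m : ℝ) - 1)) / (m : ℝ) with hηdef
  have hη : 0 < η := div_pos (by linarith) hmR
  have hq0 : ∀ k, (0:ℝ) < q k := fun k => by exact_mod_cast hq1 k
  -- the zero-mult distZ fact
  have hdistz0 : distZ (fun i => (0:ℝ) * ω i) = 0 := by
    have h : (fun i => (0:ℝ) * ω i) = (fun _ : Fin m => (0:ℝ)) := by
      funext i; ring
    rw [h, OstAux.distZ_zero]
  by_cases hub : ∀ M : ℕ, ∃ k, M < q k
  · -- q is unbounded : the genuine greedy construction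
    have hC₁ : (0:ℝ) < Chat * C' ^ (1 - 1 / (m:ℝ)) := by positivity
    have hθa : (0:ℝ) < (2:ℝ) ^ (-η) := Real.rpow_pos_of_pos (by norm_num) _
    have hθb : (2:ℝ) ^ (-η) < 1 :=
      Real.rpow_lt_one_of_one_lt_of_neg (by norm_num) (by linarith)
    obtain ⟨C₉, hC₉pos, hC₉'⟩ : ∃ C₉ : ℝ, 0 < C₉ ∧
        (Chat * C' ^ (1 - 1 / (m:ℝ))) * (1 + (2:ℝ) ^ (-η)) ≤
          C₉ * (1 - (2:ℝ) ^ (-η)) := by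
      refine ⟨(Chat * C' ^ (1 - 1 / (m:ℝ))) * (1 + (2:ℝ) ^ (-η)) / (1 - (2:ℝ) ^ (-η)),
        ?_, ?_⟩
      · apply div_pos; nlinarith; linarith
      · rw [div_mul_cancel₀ _ (by linarith : (1 - (2:ℝ) ^ (-η)) ≠ 0)]
    have hC₂pos : (0:ℝ) < 2 * (Chat * C' ^ (1 - 1 / (m:ℝ))) + C₉ := by linarith
    refine ⟨2 * (Chat * C' ^ (1 - 1 / (m:ℝ))) + C₉, hC₂pos, 1, ?_⟩
    intro k₀ hk₀ A
    have hk₀R : (1:ℝ) ≤ k₀ := by exact_mod_cast hk₀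
    by_cases hA : |A| < q k₀
    · refine ⟨0, Or.inl rfl, ?_, ?_⟩
      · simpa using hA.le
      · rw [hdistz0]
        apply div_nonneg
        · apply mul_nonneg hC₂pos.le (by positivity)
        · positivity
    · have hA' : (q k₀ : ℝ) ≤ |A| := not_lt.mp hA
      have hqN : q k₀ ≤ ⌊|A|⌋₊ := Nat.le_floor hA'
      set N := ⌊|A|⌋₊ with hNdef
      obtain ⟨r, hrN, hrlt⟩ := OstAux.gre_rem q hq1 hqmono hub k₀ N
      obtain ⟨p, hpcap, hpsupp, hpsum⟩ := OstAux.gre_rep q hq1 hqmono hub k₀ N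
      set g := OstAux.gre q hq1 hqmono hub k₀ N with hgdef
      have hgsum : g = ∑ k ∈ Finset.Icc k₀ (OstAux.greF q hub N - 1), p k * q k :=
        hpsum _ le_rfl
      have hgsumR : (g:ℝ) =
          ∑ k ∈ Finset.Icc k₀ (OstAux.greF q hub N - 1), ((p k : ℝ) * (q k : ℝ)) := by
        rw [hgsum]
        push_cast
        rfl
      -- the distZ bound
      have hterm : ∀ x K : ℕ, k₀ ≤ K → q K ≤ x → x < q (K + 1) →
          ((x / q K : ℕ) : ℝ) * OstAux.Dn ω (q K) ≤
            (Chat * C' ^ (1 - 1 / (m:ℝ))) * (q K : ℝ) ^ (-η) := by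
        intro x K _ h1 h2
        rw [hηdef]
        exact OstAux.term_bound q m hm ν Chat C' hChat hC' hq1 hqmono
          (OstAux.Dn ω) (OstAux.Dn_nonneg ω) (fun k => hA1 k)
          (fun k => (hA2' k).2) x K h2
      have hb := OstAux.gre_bound q hq1 hqmono hub k₀ (OstAux.Dn ω)
        (OstAux.Dn_zero ω) (OstAux.Dn_add ω) (OstAux.Dn_mul ω)
        η (Chat * C' ^ (1 - 1 / (m:ℝ))) C₉ hη hC₁.le hC₉pos.le hC₉' hterm N hqN
      have hb2 : OstAux.Dn ω g ≤
          (2 * (Chat * C' ^ (1 - 1 / (m:ℝ))) + C₉) * (q k₀ : ℝ) ^ (-η) := by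
        have h1 : (0:ℝ) ≤ C₉ * (N : ℝ) ^ (-η) :=
          mul_nonneg hC₉pos.le (Real.rpow_nonneg (Nat.cast_nonneg N) _)
        linarith [hb]
      have hfinal : OstAux.Dn ω g ≤
          (2 * (Chat * C' ^ (1 - 1 / (m:ℝ))) + C₉) * (k₀ : ℝ) / (q k₀ : ℝ) ^ η := by
        have hrw : (q k₀ : ℝ) ^ (-η) = ((q k₀ : ℝ) ^ η)⁻¹ :=
          Real.rpow_neg (hq0 k₀).le η
        have hpos : (0:ℝ) < (q k₀ : ℝ) ^ η := Real.rpow_pos_of_pos (hq0 k₀) η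
        calc OstAux.Dn ω g ≤
            (2 * (Chat * C' ^ (1 - 1 / (m:ℝ))) + C₉) * (q k₀ : ℝ) ^ (-η) := hb2
          _ = (2 * (Chat * C' ^ (1 - 1 / (m:ℝ))) + C₉) / (q k₀ : ℝ) ^ η := by
              rw [hrw]; ring
          _ ≤ (2 * (Chat * C' ^ (1 - 1 / (m:ℝ))) + C₉) * (k₀ : ℝ) / (q k₀ : ℝ) ^ η := by
              have hle : (2 * (Chat * C' ^ (1 - 1 / (m:ℝ))) + C₉) ≤
                  (2 * (Chat * C' ^ (1 - 1 / (m:ℝ))) + C₉) * (k₀ : ℝ) := by nlinarith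
              exact (div_le_div_iff_of_pos_right hpos).mpr hle
      -- numeric facts about g and |A|
      have hgN : g ≤ N := by omega
      have hNA : (N:ℝ) ≤ |A| := Nat.floor_le (abs_nonneg A)
      have hAN1 : |A| < N + 1 := Nat.lt_floor_add_one |A|
      have hNgr : (N:ℝ) = (g:ℝ) + (r:ℝ) := by exact_mod_cast hrN
      have hrle : (r:ℝ) ≤ (q k₀ : ℝ) - 1 := by
        have : r + 1 ≤ q k₀ := hrlt
        have := (Nat.cast_le (α := ℝ)).mpr this
        push_cast at this
        linarith
      have habs1 : 0 ≤ |A| - (g:ℝ) := by linarith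
      have habs2 : |A| - (g:ℝ) ≤ (q k₀ : ℝ) := by linarith
      by_cases hsgn : 0 ≤ A
      · have habsA : |A| = A := abs_of_nonneg hsgn
        refine ⟨(g:ℝ), Or.inr ⟨OstAux.greF q hub N - 1, p,
          fun k _ _ => hpcap k, Or.inl hgsumR⟩, ?_, ?_⟩
        · have h1 : |(g:ℝ) - A| = A - (g:ℝ) := by
            rw [abs_of_nonpos (by linarith)]; ring
          rw [h1]; linarith
        · exact hfinal
      · have hAneg : A < 0 := not_le.mp hsgn
        have habsA : |A| = -A := abs_of_nonpos hAneg.le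
        refine ⟨-(g:ℝ), Or.inr ⟨OstAux.greF q hub N - 1, p,
          fun k _ _ => hpcap k, Or.inr (by rw [hgsumR])⟩, ?_, ?_⟩
        · have h1 : (-(g:ℝ)) - A = |A| - (g:ℝ) := by rw [habsA]; ring
          rw [h1, abs_of_nonneg habs1]; linarith
        · have h2 : (fun i => (-(g:ℝ)) * ω i) = (fun i => -((g:ℝ) * ω i)) := by
            funext i; ring
          have h3 : distZ (fun i => -((g:ℝ) * ω i)) = distZ (fun i => (g:ℝ) * ω i) :=
            OstAux.distZ_neg _
          rw [h2, h3]
          exact hfinal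
  · -- q is bounded : it is eventually constant and the trivial 1/2-bound works
    push_neg at hub
    obtain ⟨M, hM⟩ := hub
    have hstab : ∃ k₁, ∀ k, k₁ ≤ k → q k = q k₁ := by
      by_contra hcon
      push_neg at hcon
      have grow : ∀ j : ℕ, ∃ k, j ≤ q k := by
        intro j
        induction j with
        | zero => exact ⟨0, Nat.zero_le _⟩
        | succ n ih =>
          obtain ⟨k, hk⟩ := ih
          obtain ⟨k', hk1, hk2⟩ := hcon k
          have h3 : q k ≤ q k' := hqmono hk1
          have h4 : q k < q k' := lt_of_le_of_ne h3 fun he => hk2 he.symm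
          exact ⟨k', by omega⟩
      obtain ⟨k, hk⟩ := grow (M + 1)
      have := hM k
      omega
    obtain ⟨k₁, hk₁⟩ := hstab
    have hc2pos : (0:ℝ) < (q k₁ : ℝ) ^ η := Real.rpow_pos_of_pos (hq0 k₁) η
    refine ⟨(q k₁ : ℝ) ^ η, hc2pos, k₁ + 1, ?_⟩
    intro k₀ hk₀ A
    have hqk₀ : q k₀ = q k₁ := hk₁ k₀ (by omega)
    have hk₀R : (1:ℝ) ≤ k₀ := by
      have : 1 ≤ k₀ := by omega
      exact_mod_cast this
    have hRHS : ((q k₁ : ℝ) ^ η) * (k₀ : ℝ) / (q k₀ : ℝ) ^ η = (k₀ : ℝ) := by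
      rw [hqk₀, mul_comm, mul_div_assoc, div_self (ne_of_gt hc2pos), mul_one]
    by_cases hA : |A| < q k₀
    · refine ⟨0, Or.inl rfl, ?_, ?_⟩
      · simpa using hA.le
      · rw [hdistz0, hRHS]
        linarith
    · have hA' : (q k₀ : ℝ) ≤ |A| := not_lt.mp hA
      have hqN : q k₀ ≤ ⌊|A|⌋₊ := Nat.le_floor hA'
      set N := ⌊|A|⌋₊ with hNdef
      set t := N / q k₀ with htdef
      have ht1 : 1 ≤ t := (Nat.one_le_div_iff (hq1 k₀)).mpr hqN
      set K := k₀ + (t - 1) with hKdef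
      set g := q k₀ * t with hgdef2
      set r := N % q k₀ with hrdef
      have hNgr' : N = g + r := by
        rw [hgdef2, hrdef]
        exact (Nat.div_add_mod N (q k₀)).symm
      have hrlt : r < q k₀ := Nat.mod_lt _ (hq1 k₀)
      have hsum : (g : ℝ) = ∑ k ∈ Finset.Icc k₀ K, ((1:ℕ) : ℝ) * (q k : ℝ) := by
        have hconst : ∀ k ∈ Finset.Icc k₀ K, ((1:ℕ) : ℝ) * (q k : ℝ) = (q k₀ : ℝ) := by
          intro k hk
          rw [Finset.mem_Icc] at hk
          have : q k = q k₁ := hk₁ k (by omega)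
          rw [this, hqk₀]
          simp
        rw [Finset.sum_congr rfl hconst, Finset.sum_const, Nat.card_Icc]
        have hcard : K + 1 - k₀ = t := by omega
        rw [hcard, nsmul_eq_mul, hgdef2]
        push_cast
        ring
      -- common numeric facts
      have hgN : g ≤ N := by omega
      have hNA : (N:ℝ) ≤ |A| := Nat.floor_le (abs_nonneg A)
      have hAN1 : |A| < N + 1 := Nat.lt_floor_add_one |A|
      have hNgr : (N:ℝ) = (g:ℝ) + (r:ℝ) := by exact_mod_cast hNgr'
      have hrle : (r:ℝ) ≤ (q k₀ : ℝ) - 1 := by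
        have : r + 1 ≤ q k₀ := hrlt
        have := (Nat.cast_le (α := ℝ)).mpr this
        push_cast at this
        linarith
      have habs1 : 0 ≤ |A| - (g:ℝ) := by linarith
      have habs2 : |A| - (g:ℝ) ≤ (q k₀ : ℝ) := by linarith
      have hhalf : distZ (fun i => ((g:ℕ):ℝ) * ω i) ≤ 1/2 := OstAux.distZ_le_half _
      have hcap : ∀ k, k₀ ≤ k → k ≤ K → (1:ℕ) ≤ q (k + 1) / q k :=
        fun k _ _ => (Nat.one_le_div_iff (hq1 k)).mpr (hqmono (Nat.le_succ k))
      by_cases hsgn : 0 ≤ A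
      · have habsA : |A| = A := abs_of_nonneg hsgn
        refine ⟨(g:ℝ), Or.inr ⟨K, fun _ => 1, hcap, Or.inl hsum⟩, ?_, ?_⟩
        · have h1 : |(g:ℝ) - A| = A - (g:ℝ) := by
            rw [abs_of_nonpos (by linarith)]; ring
          rw [h1]; linarith
        · rw [hRHS]
          calc distZ (fun i => (g:ℝ) * ω i) ≤ 1/2 := hhalf
            _ ≤ (k₀:ℝ) := by linarith
      · have hAneg : A < 0 := not_le.mp hsgn
        have habsA : |A| = -A := abs_of_nonpos hAneg.le
        refine ⟨-(g:ℝ), Or.inr ⟨K, fun _ => 1, hcap, Or.inr (by rw [hsum])⟩, ?_, ?_⟩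
        · have h1 : (-(g:ℝ)) - A = |A| - (g:ℝ) := by rw [habsA]; ring
          rw [h1, abs_of_nonneg habs1]; linarith
        · have h2 : (fun i => (-(g:ℝ)) * ω i) = (fun i => -((g:ℝ) * ω i)) := by
            funext i; ring
          have h3 : distZ (fun i => -((g:ℝ) * ω i)) = distZ (fun i => (g:ℝ) * ω i) :=
            OstAux.distZ_neg _
          rw [h2, h3, hRHS]
          calc distZ (fun i => (g:ℝ) * ω i) ≤ 1/2 := hhalf
            _ ≤ (k₀:ℝ) := by linarith
end
end

section
/- Let A be a real m×n matrix, Â the (m+n)×n matrix stacking the n×n identity on top of A, and φ̂(t) = Ât on 𝕋^(m+n). For θ in the closure of {Aq mod ℤ^m : q ∈ ℤⁿ}, the Diophantine dimension of the family of sets of integer solutions q ∈ ℤⁿ of |Aq − θ|_m ≤ ε equals the Diophantine dimension 𝔇𝔦(φ̂) of the almost periodic function φ̂, and the analogous equality holds for lower Diophantine dimensions. -/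
noncomputable section

/-- The flat torus `𝕋^k = ℝ^k/ℤ^k`. -/
abbrev Torus (k : ℕ) := Fin k → AddCircle (1 : ℝ)

/-- Reduction of a point of `ℝ^k` modulo `ℤ^k`. -/
def toTorus {k : ℕ} (x : Fin k → ℝ) : Torus k := fun i => (x i : AddCircle (1 : ℝ))

/-- The optimal inclusion length of the set of `ε`-almost periods of `φ`. -/
def inclLen {n : ℕ} {X : Type*} [PseudoMetricSpace X]
    (φ : (Fin n → ℝ) → X) (ε : ℝ) : ℝ :=
  sInf {L : ℝ | 0 ≤ L ∧
    ∀ a : Fin n → ℝ, ∃ τ, (∀ i, τ i ∈ Set.Icc (a i) (a i + L)) ∧ IsAP φ ε τ}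

/-- Optimal inclusion length of the set of integer solutions `q ∈ ℤⁿ` of
`|Aq − θ|_m ≤ ε`. -/
def matInclLen {m n : ℕ} (A : Matrix (Fin m) (Fin n) ℝ) (θ : Torus m)
    (ε : ℝ) : ℝ :=
  sInf {L : ℝ | 0 ≤ L ∧ ∀ a : Fin n → ℝ, ∃ q : Fin n → ℤ,
    (∀ i, a i ≤ (q i : ℝ) ∧ (q i : ℝ) ≤ a i + L) ∧
    dist (toTorus (A.mulVec fun j => (q j : ℝ))) θ ≤ ε}

/-! ### Auxiliary lemmas: coordinates of the torus -/

lemma acnorm (x : ℝ) : dist ((x : AddCircle (1:ℝ))) 0 = |x - round x| := by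
  rw [dist_zero_right, AddCircle.norm_eq]
  norm_num

lemma acnorm_int (q : ℤ) : dist (((q:ℝ) : AddCircle (1:ℝ))) 0 = 0 := by
  rw [acnorm, round_intCast]; simp

lemma acnorm_le_abs (x : ℝ) : dist ((x : AddCircle (1:ℝ))) 0 ≤ |x| := by
  rw [acnorm]
  rcases le_or_gt (1/2) |x| with h | h
  · exact (abs_sub_round x).trans h
  · have : round x = 0 := round_eq_zero_iff.2
      (by constructor <;> [linarith [neg_abs_le x]; linarith [le_abs_self x]])
    simp [this]

lemma ac_exists_int {x ε : ℝ} (h : dist ((x : AddCircle (1:ℝ))) 0 ≤ ε) :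
    ∃ p : ℤ, |x - (p:ℝ)| ≤ ε := ⟨round x, by rwa [acnorm] at h⟩

lemma ac_dist_eq (x y : ℝ) :
    dist ((x : AddCircle (1:ℝ))) (y : AddCircle (1:ℝ))
      = dist (((x - y : ℝ) : AddCircle (1:ℝ))) 0 := by
  rw [dist_eq_norm, dist_zero_right]; rfl

lemma ac_tri (x y : ℝ) :
    dist (((x + y : ℝ) : AddCircle (1:ℝ))) 0
      ≤ dist ((x:AddCircle (1:ℝ))) 0 + dist ((y:AddCircle (1:ℝ))) 0 := by
  rw [dist_zero_right, dist_zero_right, dist_zero_right]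
  exact norm_add_le (x : AddCircle (1:ℝ)) (y : AddCircle (1:ℝ))

variable {m n : ℕ}

lemma ac_mulVec_dist (A : Matrix (Fin m) (Fin n) ℝ) (v w : Fin n → ℝ) (j : Fin m) :
    dist ((A.mulVec v j : ℝ) : AddCircle (1:ℝ)) ((A.mulVec w j : ℝ) : AddCircle (1:ℝ))
      = dist (((A.mulVec (v - w) j : ℝ)) : AddCircle (1:ℝ)) 0 := by
  rw [ac_dist_eq]
  congr 2
  rw [Matrix.mulVec_sub]
  simp

/-! ### The extended function `φ̂` and its almost periods -/

def phihat (A : Matrix (Fin m) (Fin n) ℝ) : (Fin n → ℝ) → Torus (n + m) :=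
  fun t => toTorus (Fin.append t (A.mulVec t))

lemma append_add (t τ : Fin n → ℝ) (u v : Fin m → ℝ) :
    Fin.append (t + τ) (u + v) = Fin.append t u + Fin.append τ v := by
  funext i
  refine Fin.addCases (fun j => ?_) (fun j => ?_) i <;>
    simp [Fin.append_left, Fin.append_right]

lemma coord_dist (A : Matrix (Fin m) (Fin n) ℝ) (t τ : Fin n → ℝ) (i : Fin (n + m)) :
    dist (phihat A (t + τ) i) (phihat A t i) = dist (phihat A τ i) 0 := by
  have h1 : phihat A (t + τ) i = phihat A t i + phihat A τ i := by
    simp only [phihat, toTorus, Matrix.mulVec_add, append_add, Pi.add_apply]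
    rfl
  rw [h1, dist_eq_norm, dist_eq_norm, add_sub_cancel_left, sub_zero]

lemma isAP_phihat (A : Matrix (Fin m) (Fin n) ℝ) (hn : 0 < n) (ε : ℝ) (τ : Fin n → ℝ) :
    IsAP (phihat A) ε τ ↔ ∀ i : Fin (n + m), dist (phihat A τ i) 0 ≤ ε := by
  constructor
  · intro h i
    have h0 := h 0
    have := dist_le_pi_dist (phihat A (0 + τ)) (phihat A 0) i
    rw [coord_dist A 0 τ i] at this
    exact this.trans h0
  · intro h t
    have hε : 0 ≤ ε := le_trans dist_nonneg (h ⟨0, by omega⟩)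
    rw [dist_pi_le_iff hε]
    intro i
    rw [coord_dist A t τ i]
    exact h i

lemma phihat_left (A : Matrix (Fin m) (Fin n) ℝ) (τ : Fin n → ℝ) (j : Fin n) :
    phihat A τ (Fin.castAdd m j) = ((τ j : ℝ) : AddCircle (1:ℝ)) := by
  simp [phihat, toTorus, Fin.append_left]

lemma phihat_right (A : Matrix (Fin m) (Fin n) ℝ) (τ : Fin n → ℝ) (j : Fin m) :
    phihat A τ (Fin.natAdd n j) = ((A.mulVec τ j : ℝ) : AddCircle (1:ℝ)) := by
  simp [phihat, toTorus, Fin.append_right]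

/-! ### The two families of sets -/

def matSet (A : Matrix (Fin m) (Fin n) ℝ) (θ : Torus m) (ε : ℝ) : Set ℝ :=
  {L : ℝ | 0 ≤ L ∧ ∀ a : Fin n → ℝ, ∃ q : Fin n → ℤ,
    (∀ i, a i ≤ (q i : ℝ) ∧ (q i : ℝ) ≤ a i + L) ∧
    dist (toTorus (A.mulVec fun j => (q j : ℝ))) θ ≤ ε}

def apSet {n : ℕ} {X : Type*} [PseudoMetricSpace X]
    (φ : (Fin n → ℝ) → X) (ε : ℝ) : Set ℝ :=
  {L : ℝ | 0 ≤ L ∧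
    ∀ a : Fin n → ℝ, ∃ τ, (∀ i, τ i ∈ Set.Icc (a i) (a i + L)) ∧ IsAP φ ε τ}

lemma matInclLen_eq (A : Matrix (Fin m) (Fin n) ℝ) (θ : Torus m) (ε : ℝ) :
    matInclLen A θ ε = sInf (matSet A θ ε) := rfl

lemma inclLen_eq {X : Type*} [PseudoMetricSpace X] (φ : (Fin n → ℝ) → X) (ε : ℝ) :
    inclLen φ ε = sInf (apSet φ ε) := rfl
lemma density (A : Matrix (Fin m) (Fin n) ℝ) (θ : Torus m)
    (hθ : θ ∈ closure {x : Torus m | ∃ q : Fin n → ℤ,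
      x = toTorus (A.mulVec fun j => (q j : ℝ))}) {ε : ℝ} (hε : 0 < ε) :
    (matSet A θ ε).Nonempty := by
  set D : (Fin n → ℤ) → Torus m := fun q => toTorus (A.mulVec fun j => (q j : ℝ)) with hD
  set S : Set (Torus m) := {x : Torus m | ∃ q : Fin n → ℤ, x = D q} with hS
  -- compactness
  have hK : IsCompact (closure S) := isClosed_closure.isCompact
  have hcover : closure S ⊆ ⋃ q : Fin n → ℤ, Metric.ball (D q) (ε / 2) := by
    intro x hx
    rcases Metric.mem_closure_iff.1 hx (ε/2) (by linarith) with ⟨y, ⟨q, rfl⟩, hy⟩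
    exact Set.mem_iUnion.2 ⟨q, by simpa [Metric.mem_ball, dist_comm] using hy⟩
  obtain ⟨t, ht⟩ := hK.elim_finite_subcover _ (fun q => Metric.isOpen_ball) hcover
  set R : ℕ := t.sup fun p => Finset.univ.sup fun i => (p i).natAbs with hR
  have hpR : ∀ p ∈ t, ∀ i, |p i| ≤ (R : ℤ) := by
    intro p hp i
    have h1a : (p i).natAbs ≤ Finset.univ.sup fun i => (p i).natAbs :=
      Finset.le_sup (f := fun i => (p i).natAbs) (Finset.mem_univ i)
    have h1b : (Finset.univ.sup fun i => (p i).natAbs) ≤ R :=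
      Finset.le_sup (f := fun p : Fin n → ℤ => Finset.univ.sup fun i => (p i).natAbs) hp
    have h1 : (p i).natAbs ≤ R := le_trans h1a h1b
    rw [Int.abs_eq_natAbs]
    exact_mod_cast h1
  -- base point
  obtain ⟨y₀, ⟨q₀, rfl⟩, hq₀⟩ := Metric.mem_closure_iff.1 hθ (ε/2) (by linarith)
  refine ⟨2 * R + 1, by positivity, fun a => ?_⟩
  -- pick b
  set b : Fin n → ℤ := fun i => ⌈a i - q₀ i⌉ + R with hb
  have hbK : D b ∈ closure S := subset_closure ⟨b, rfl⟩
  obtain ⟨p, hp, hdp⟩ := Set.mem_iUnion₂.1 (ht hbK)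
  refine ⟨fun i => b i - p i + q₀ i, fun i => ?_, ?_⟩
  · have h2 : (|p i| : ℤ) ≤ R := hpR p hp i
    have hc1 : a i - q₀ i ≤ (⌈a i - q₀ i⌉ : ℝ) := Int.le_ceil _
    have hc2 : (⌈a i - q₀ i⌉ : ℝ) ≤ a i - q₀ i + 1 := le_of_lt (Int.ceil_lt_add_one _)
    have hp1 : ((p i : ℝ)) ≤ R := by exact_mod_cast le_of_abs_le h2
    have hp2 : (-(R:ℝ)) ≤ p i := by exact_mod_cast neg_le_of_abs_le h2
    constructor
    · simp only [hb]; push_cast; push_cast at hc1; nlinarith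
    · simp only [hb]; push_cast; push_cast at hc2; nlinarith
  · -- distance bound
    have key : ∀ j, dist (toTorus (A.mulVec fun i => ((b i - p i + q₀ i : ℤ) : ℝ)) j) (θ j) ≤ ε := by
      intro j
      have tri := dist_triangle (toTorus (A.mulVec fun i => ((b i - p i + q₀ i : ℤ) : ℝ)) j)
        (D q₀ j) (θ j)
      have h2 : dist (D q₀ j) (θ j) ≤ ε / 2 :=
        le_of_lt (lt_of_le_of_lt (dist_le_pi_dist _ _ j) (by rwa [dist_comm] at hq₀))
      have h1 : dist (toTorus (A.mulVec fun i => ((b i - p i + q₀ i : ℤ) : ℝ)) j) (D q₀ j)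
          ≤ ε / 2 := by
        have e1 : ((fun i => ((b i - p i + q₀ i : ℤ) : ℝ)) - (fun i => ((q₀ i : ℤ) : ℝ)))
            = ((fun i => ((b i : ℤ) : ℝ)) - (fun i => ((p i : ℤ) : ℝ))) := by
          funext i; simp only [Pi.sub_apply]; push_cast; ring
        have e2 : dist (toTorus (A.mulVec fun i => ((b i - p i + q₀ i : ℤ) : ℝ)) j) (D q₀ j)
            = dist (D b j) (D p j) := by
          simp only [hD, toTorus]
          rw [ac_mulVec_dist, ac_mulVec_dist, e1]
        rw [e2]
        exact le_of_lt (lt_of_le_of_lt (dist_le_pi_dist (D b) (D p) j) hdp)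
      linarith
    rw [dist_pi_le_iff hε.le]
    exact key
variable (A : Matrix (Fin m) (Fin n) ℝ) (θ : Torus m)

def thetaHyp (A : Matrix (Fin m) (Fin n) ℝ) (θ : Torus m) : Prop :=
  θ ∈ closure {x : Torus m | ∃ q : Fin n → ℤ,
      x = toTorus (A.mulVec fun j => (q j : ℝ))}

lemma exists_q0 (hθ : thetaHyp A θ) {ε : ℝ} (hε : 0 < ε) :
    ∃ q₀ : Fin n → ℤ, dist (toTorus (A.mulVec fun j => ((q₀ j : ℤ) : ℝ))) θ ≤ ε := by
  obtain ⟨y, ⟨q₀, rfl⟩, hy⟩ := Metric.mem_closure_iff.1 hθ ε hε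
  exact ⟨q₀, by rw [dist_comm]; exact hy.le⟩

lemma matSet_subset_apSet (hn : 0 < n) (hθ : thetaHyp A θ) {ε : ℝ} (hε : 0 < ε) :
    matSet A θ ε ⊆ apSet (phihat A) (2 * ε) := by
  obtain ⟨q₀, hq₀⟩ := exists_q0 A θ hθ hε
  rintro L ⟨hL0, hL⟩
  refine ⟨hL0, fun a => ?_⟩
  obtain ⟨q, hq, hqd⟩ := hL (fun i => a i + q₀ i)
  refine ⟨fun i => (q i : ℝ) - q₀ i, fun i =>
    ⟨by dsimp only; linarith [(hq i).1], by dsimp only; linarith [(hq i).2]⟩, ?_⟩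
  rw [isAP_phihat A hn]
  intro i
  refine Fin.addCases (fun j => ?_) (fun j => ?_) i
  · rw [phihat_left]
    have : ((q j : ℝ) - q₀ j) = (((q j - q₀ j : ℤ) : ℝ)) := by push_cast; ring
    rw [this, acnorm_int]
    linarith
  · rw [phihat_right]
    have e1 : (fun i => (q i : ℝ) - (q₀ i : ℝ))
        = (fun i => (q i : ℝ)) - (fun i => ((q₀ i : ℤ) : ℝ)) := by
      funext i; simp [Pi.sub_apply]
    have e2 : dist ((A.mulVec (fun i => (q i : ℝ) - q₀ i) j : ℝ) : AddCircle (1:ℝ)) 0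
        = dist ((A.mulVec (fun i => (q i : ℝ)) j : ℝ) : AddCircle (1:ℝ))
            ((A.mulVec (fun i => ((q₀ i : ℤ) : ℝ)) j : ℝ) : AddCircle (1:ℝ)) := by
      rw [ac_mulVec_dist, e1]
    rw [e2]
    have t1 : dist ((A.mulVec (fun i => (q i : ℝ)) j : ℝ) : AddCircle (1:ℝ)) (θ j) ≤ ε :=
      le_trans (dist_le_pi_dist (toTorus (A.mulVec fun i => (q i : ℝ))) θ j) hqd
    have t2 : dist (θ j) ((A.mulVec (fun i => ((q₀ i : ℤ) : ℝ)) j : ℝ) : AddCircle (1:ℝ)) ≤ ε := by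
      rw [dist_comm]
      exact le_trans (dist_le_pi_dist (toTorus (A.mulVec fun i => ((q₀ i:ℤ) : ℝ))) θ j) hq₀
    calc dist ((A.mulVec (fun i => (q i : ℝ)) j : ℝ) : AddCircle (1:ℝ))
          ((A.mulVec (fun i => ((q₀ i : ℤ) : ℝ)) j : ℝ) : AddCircle (1:ℝ))
        ≤ _ + _ := dist_triangle _ (θ j) _
      _ ≤ 2 * ε := by linarith

def Kbound (A : Matrix (Fin m) (Fin n) ℝ) : ℝ :=
  ∑ j : Fin m, ∑ i : Fin n, |A j i|

lemma Kbound_nonneg (A : Matrix (Fin m) (Fin n) ℝ) : 0 ≤ Kbound A := by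
  apply Finset.sum_nonneg; intro j _; apply Finset.sum_nonneg; intro i _; positivity

lemma mulVec_bound (A : Matrix (Fin m) (Fin n) ℝ) {v : Fin n → ℝ} {ε : ℝ} (hε : 0 ≤ ε)
    (hv : ∀ i, |v i| ≤ ε) (j : Fin m) : |A.mulVec v j| ≤ Kbound A * ε := by
  have h1 : |A.mulVec v j| ≤ ∑ i : Fin n, |A j i| * ε := by
    rw [Matrix.mulVec, dotProduct]
    refine le_trans (Finset.abs_sum_le_sum_abs _ _) ?_
    apply Finset.sum_le_sum
    intro i _
    rw [abs_mul]
    exact mul_le_mul_of_nonneg_left (hv i) (abs_nonneg _)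
  refine h1.trans ?_
  rw [← Finset.sum_mul]
  apply mul_le_mul_of_nonneg_right _ hε
  exact Finset.single_le_sum (f := fun j => ∑ i : Fin n, |A j i|)
    (fun j _ => Finset.sum_nonneg fun i _ => abs_nonneg _) (Finset.mem_univ j)

lemma apSet_to_matSet (A : Matrix (Fin m) (Fin n) ℝ) (θ : Torus m) (hn : 0 < n)
    (hθ : thetaHyp A θ) {ε : ℝ} (hε : 0 < ε) {L : ℝ} (hL : L ∈ apSet (phihat A) ε) :
    L + 2 * ε ∈ matSet A θ ((Kbound A + 2) * ε) := by
  obtain ⟨q₀, hq₀⟩ := exists_q0 A θ hθ hε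
  obtain ⟨hL0, hLa⟩ := hL
  refine ⟨by linarith, fun a => ?_⟩
  obtain ⟨τ, hτmem, hτap⟩ := hLa (fun i => a i - q₀ i + ε)
  rw [isAP_phihat A hn] at hτap
  -- round τ to integers
  have hround : ∀ i, |τ i - round (τ i)| ≤ ε := by
    intro i
    have := hτap (Fin.castAdd m i)
    rw [phihat_left, acnorm] at this
    exact this
  refine ⟨fun i => round (τ i) + q₀ i, fun i => ?_, ?_⟩
  · obtain ⟨h1, h2⟩ := hτmem i
    have h3 := hround i
    have h4 := abs_le.1 h3
    constructor
    · push_cast; simp only [Set.mem_Icc] at *; linarith [h4.1, h1]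
    · push_cast; simp only [Set.mem_Icc] at *; linarith [h4.2, h2]
  · have hpos : (0:ℝ) ≤ (Kbound A + 2) * ε := by nlinarith [Kbound_nonneg A, hε.le]
    rw [dist_pi_le_iff hpos]
    intro j
    have tri := dist_triangle
      (toTorus (A.mulVec fun i => (((round (τ i) + q₀ i : ℤ)) : ℝ)) j)
      (toTorus (A.mulVec fun i => ((q₀ i : ℤ) : ℝ)) j) (θ j)
    have h2 : dist (toTorus (A.mulVec fun i => ((q₀ i : ℤ) : ℝ)) j) (θ j) ≤ ε :=
      le_trans (dist_le_pi_dist _ _ j) hq₀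
    have h1 : dist (toTorus (A.mulVec fun i => (((round (τ i) + q₀ i : ℤ)) : ℝ)) j)
        (toTorus (A.mulVec fun i => ((q₀ i : ℤ) : ℝ)) j) ≤ (Kbound A + 1) * ε := by
      have e1 : ((fun i => (((round (τ i) + q₀ i : ℤ)) : ℝ)) - fun i => ((q₀ i : ℤ) : ℝ))
          = (τ + fun i => ((round (τ i) : ℝ) - τ i)) := by
        funext i; simp only [Pi.sub_apply, Pi.add_apply]; push_cast; ring
      have e2 : dist (toTorus (A.mulVec fun i => (((round (τ i) + q₀ i : ℤ)) : ℝ)) j)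
          (toTorus (A.mulVec fun i => ((q₀ i : ℤ) : ℝ)) j)
          = dist ((A.mulVec (τ + fun i => ((round (τ i) : ℝ) - τ i)) j : ℝ) : AddCircle (1:ℝ)) 0 := by
        simp only [toTorus]
        rw [ac_mulVec_dist, e1]
      rw [e2, Matrix.mulVec_add]
      have tri2 := ac_tri (A.mulVec τ j) (A.mulVec (fun i => ((round (τ i) : ℝ) - τ i)) j)
      have b1 : dist ((A.mulVec τ j : ℝ) : AddCircle (1:ℝ)) 0 ≤ ε := by
        have := hτap (Fin.natAdd n j)
        rwa [phihat_right] at this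
      have b2 : dist ((A.mulVec (fun i => ((round (τ i) : ℝ) - τ i)) j : ℝ) : AddCircle (1:ℝ)) 0
          ≤ Kbound A * ε := by
        refine le_trans (acnorm_le_abs _) ?_
        exact mulVec_bound A hε.le (fun i => by rw [abs_sub_comm]; exact hround i) j
      calc dist (((A.mulVec τ j + A.mulVec (fun i => ((round (τ i) : ℝ) - τ i)) j : ℝ)) : AddCircle (1:ℝ)) 0
          ≤ _ + _ := tri2
        _ ≤ ε + Kbound A * ε := add_le_add b1 b2
        _ = (Kbound A + 1) * ε := by ring
    calc dist (toTorus (A.mulVec fun i => (((round (τ i) + q₀ i : ℤ)) : ℝ)) j) (θ j)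
        ≤ _ + _ := tri
      _ ≤ (Kbound A + 1) * ε + ε := add_le_add h1 h2
      _ = (Kbound A + 2) * ε := by ring

lemma int_in_unit_interval {L : ℝ} (hL0 : 0 ≤ L) (hL : L < 1) {p : ℤ}
    (h1 : (1 - L)/2 - 0 ≤ (p:ℝ)) (h2 : (p:ℝ) ≤ (1 - L)/2 + L + 0) : False := by
  have hp1 : (0:ℝ) < p := by linarith
  have hp2 : (p:ℝ) < 1 := by linarith
  have : (0:ℤ) < p := by exact_mod_cast hp1
  have : (1:ℤ) ≤ p := this
  have : (1:ℝ) ≤ p := by exact_mod_cast this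
  linarith

lemma matSet_ge_one (A : Matrix (Fin m) (Fin n) ℝ) (θ : Torus m) (hn : 0 < n) {ε L : ℝ}
    (hL : L ∈ matSet A θ ε) : 1 ≤ L := by
  obtain ⟨hL0, hLa⟩ := hL
  by_contra hc
  push_neg at hc
  obtain ⟨q, hq, -⟩ := hLa (fun _ => (1 - L)/2)
  obtain ⟨h1, h2⟩ := hq ⟨0, hn⟩
  exact int_in_unit_interval (p := q ⟨0, hn⟩) hL0 hc (by linarith) (by linarith)

lemma apSet_ge (A : Matrix (Fin m) (Fin n) ℝ) (hn : 0 < n) {ε L : ℝ} (hε : 0 < ε)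
    (hL : L ∈ apSet (phihat A) ε) : 1 - 2 * ε ≤ L := by
  obtain ⟨hL0, hLa⟩ := hL
  by_contra hc
  push_neg at hc
  obtain ⟨τ, hτ, hap⟩ := hLa (fun _ => (1 - L - 2*ε)/2 + ε)
  rw [isAP_phihat A hn] at hap
  set i₀ : Fin n := ⟨0, hn⟩
  have h := hap (Fin.castAdd m i₀)
  rw [phihat_left] at h
  obtain ⟨p, hp⟩ := ac_exists_int h
  obtain ⟨h1, h2⟩ := hτ i₀
  have h4 := abs_le.1 hp
  -- p ∈ [(1-L-2ε)/2, (1-L-2ε)/2 + L + 2ε], an interval inside (0,1)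
  have hp1 : (1 - (L + 2*ε))/2 - 0 ≤ (p:ℝ) := by linarith [h4.1]
  have hp2 : (p:ℝ) ≤ (1 - (L + 2*ε))/2 + (L + 2*ε) + 0 := by linarith [h4.2]
  exact int_in_unit_interval (by linarith) (by linarith) hp1 hp2

lemma matSet_bddBelow (A : Matrix (Fin m) (Fin n) ℝ) (θ : Torus m) (ε : ℝ) :
    BddBelow (matSet A θ ε) := ⟨0, fun L hL => hL.1⟩

lemma apSet_bddBelow {X : Type*} [PseudoMetricSpace X] (φ : (Fin n → ℝ) → X) (ε : ℝ) :
    BddBelow (apSet φ ε) := ⟨0, fun L hL => hL.1⟩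

lemma matSet_mono (A : Matrix (Fin m) (Fin n) ℝ) (θ : Torus m) {ε ε' : ℝ} (h : ε ≤ ε') :
    matSet A θ ε ⊆ matSet A θ ε' := by
  rintro L ⟨h0, ha⟩
  exact ⟨h0, fun a => by obtain ⟨q, hq, hd⟩ := ha a; exact ⟨q, hq, hd.trans h⟩⟩

section comparisons

variable (A : Matrix (Fin m) (Fin n) ℝ) (θ : Torus m) (hm : 0 < m) (hn : 0 < n)
  (hθ : thetaHyp A θ)

lemma apSet_nonempty (hn : 0 < n) (hθ : thetaHyp A θ) {ε : ℝ} (hε : 0 < ε) :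
    (apSet (phihat A) ε).Nonempty := by
  obtain ⟨L, hL⟩ := density A θ hθ (half_pos hε)
  have h2 := matSet_subset_apSet A θ hn hθ (half_pos hε) hL
  rw [show 2 * (ε/2) = ε by ring] at h2
  exact ⟨L, h2⟩

lemma F_ge_one (hn : 0 < n) (hθ : thetaHyp A θ) {ε : ℝ} (hε : 0 < ε) :
    1 ≤ matInclLen A θ ε := by
  rw [matInclLen_eq]
  exact le_csInf (density A θ hθ hε) (fun L hL => matSet_ge_one A θ hn hL)

lemma G_ge (hn : 0 < n) (hθ : thetaHyp A θ) {ε : ℝ} (hε : 0 < ε) :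
    1 - 2 * ε ≤ inclLen (phihat A) ε := by
  rw [inclLen_eq]
  exact le_csInf (apSet_nonempty A θ hn hθ hε) (fun L hL => apSet_ge A hn hε hL)

lemma F_antitone (hθ : thetaHyp A θ) {ε ε' : ℝ} (hε : 0 < ε) (h : ε ≤ ε') :
    matInclLen A θ ε' ≤ matInclLen A θ ε := by
  rw [matInclLen_eq, matInclLen_eq]
  exact csInf_le_csInf (matSet_bddBelow A θ ε') (density A θ hθ hε) (matSet_mono A θ h)

lemma G_le_F (hn : 0 < n) (hθ : thetaHyp A θ) {ε : ℝ} (hε : 0 < ε) :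
    inclLen (phihat A) (2 * ε) ≤ matInclLen A θ ε := by
  rw [inclLen_eq, matInclLen_eq]
  exact csInf_le_csInf (apSet_bddBelow _ _) (density A θ hθ hε)
    (matSet_subset_apSet A θ hn hθ hε)

lemma F_le_G (hn : 0 < n) (hθ : thetaHyp A θ) {ε : ℝ} (hε : 0 < ε) :
    matInclLen A θ ((Kbound A + 2) * ε) ≤ inclLen (phihat A) ε + 2 * ε := by
  rw [matInclLen_eq, inclLen_eq]
  have h1 : ∀ L ∈ apSet (phihat A) ε, sInf (matSet A θ ((Kbound A + 2) * ε)) ≤ L + 2 * ε := by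
    intro L hL
    exact csInf_le (matSet_bddBelow A θ _) (apSet_to_matSet A θ hn hθ hε hL)
  have h2 : sInf (matSet A θ ((Kbound A + 2) * ε)) - 2*ε ≤ sInf (apSet (phihat A) ε) :=
    le_csInf (apSet_nonempty A θ hn hθ hε) (fun L hL => by linarith [h1 L hL])
  linarith

end comparisons

/-! ### Filter layer -/
open Filter Topology

notation "LL" => nhdsWithin (0:ℝ) (Set.Ioi 0)

section master
variable {f g σ τ' : ℝ → ℝ}

def Hcomp (f g σ : ℝ → ℝ) : Prop :=
  ∀ ρ > 0, ∀ᶠ ε in LL, f ε ≤ (1+ρ) * g (σ ε) + ρ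

lemma mem_nonneg {f : ℝ → ℝ} (hf : ∀ ρ > 0, ∀ᶠ ε in LL, -ρ ≤ f ε) {b : ℝ}
    (hb : ∀ᶠ ε in LL, f ε ≤ b) : 0 ≤ b := by
  by_contra hc
  push_neg at hc
  obtain ⟨ε, h1, h2⟩ := ((hf (-b/2) (by linarith)).and hb).exists
  linarith

lemma master_limsup_le (hσ : Tendsto σ LL LL)
    (hf : ∀ ρ > 0, ∀ᶠ ε in LL, -ρ ≤ f ε) (hg : ∀ ρ > 0, ∀ᶠ ε in LL, -ρ ≤ g ε)
    (H : Hcomp f g σ) (hbd : ∃ b, ∀ᶠ ε in LL, g ε ≤ b) :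
    limsup f LL ≤ limsup g LL := by
  rw [limsup_eq, limsup_eq]
  have hSf_bdd : BddBelow {a | ∀ᶠ ε in LL, f ε ≤ a} := ⟨0, fun b hb => mem_nonneg hf hb⟩
  obtain ⟨b₀, hb₀⟩ := hbd
  apply le_csInf ⟨b₀, hb₀⟩
  intro b hb
  have hb0 : 0 ≤ b := mem_nonneg hg hb
  apply le_of_forall_pos_le_add
  intro ρ hρ
  have hρ' : 0 < ρ/(1+b) := by positivity
  have h2 : ∀ᶠ ε in LL, g (σ ε) ≤ b := hσ.eventually hb
  have hcanc : ρ/(1+b) * (1+b) = ρ := div_mul_cancel₀ _ (by linarith)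
  have h3 : ∀ᶠ ε in LL, f ε ≤ b + ρ := by
    filter_upwards [H _ hρ', h2] with ε e1 e2
    have e3 : (1+ρ/(1+b)) * g (σ ε) ≤ (1+ρ/(1+b)) * b :=
      mul_le_mul_of_nonneg_left e2 (by positivity)
    nlinarith
  exact csInf_le hSf_bdd h3

lemma master_liminf_le (hτ' : Tendsto τ' LL LL) (hid : ∀ u, σ (τ' u) = u)
    (hf : ∀ ρ > 0, ∀ᶠ ε in LL, -ρ ≤ f ε) (hg : ∀ ρ > 0, ∀ᶠ ε in LL, -ρ ≤ g ε)
    (H : Hcomp f g σ) (hbd : BddAbove {a : ℝ | ∀ᶠ ε in LL, a ≤ g ε}) :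
    liminf f LL ≤ liminf g LL := by
  rw [liminf_eq, liminf_eq]
  have hsup0 : 0 ≤ sSup {a : ℝ | ∀ᶠ ε in LL, a ≤ g ε} := by
    apply le_of_forall_pos_le_add
    intro ρ hρ
    have := le_csSup hbd (hg ρ hρ : (-ρ) ∈ {a : ℝ | ∀ᶠ ε in LL, a ≤ g ε})
    linarith
  have hne : Set.Nonempty {a : ℝ | ∀ᶠ ε in LL, a ≤ f ε} := ⟨-1, hf 1 one_pos⟩
  apply csSup_le hne
  intro a ha
  rcases le_or_gt a 0 with h | h
  · exact h.trans hsup0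
  · apply le_of_forall_pos_le_add
    intro ρ hρ
    have hρ' : 0 < ρ/(1+a) := by positivity
    have hcanc : ρ/(1+a) * (1+a) = ρ := div_mul_cancel₀ _ (by linarith)
    have key : ∀ᶠ ε in LL, a - ρ ≤ g (σ ε) := by
      filter_upwards [H _ hρ', ha] with ε e1 e2
      have e3 : (a - ρ/(1+a)) ≤ (1+ρ/(1+a)) * g (σ ε) := by linarith
      have e4 : (a-ρ)*(1+ρ/(1+a)) ≤ (1+ρ/(1+a)) * g (σ ε) := by nlinarith
      have e5 : (1+ρ/(1+a))*(a-ρ) ≤ (1+ρ/(1+a)) * g (σ ε) := by linarith [e4]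
      exact le_of_mul_le_mul_left e5 (by positivity)
    have key2 : ∀ᶠ u in LL, a - ρ ≤ g u := by
      have h5 := hτ'.eventually key
      simpa only [hid] using h5
    have := le_csSup hbd key2
    linarith

lemma S_transfer (hσ : Tendsto σ LL LL) (H : Hcomp f g σ)
    (hb : ∃ b, ∀ᶠ ε in LL, g ε ≤ b) : ∃ b, ∀ᶠ ε in LL, f ε ≤ b := by
  obtain ⟨b, hb⟩ := hb
  refine ⟨2*b+1, ?_⟩
  filter_upwards [H 1 one_pos, hσ.eventually hb] with ε e1 e2
  nlinarith

lemma I_transfer (hτ' : Tendsto τ' LL LL) (hid : ∀ u, σ (τ' u) = u) (H : Hcomp f g σ)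
    (hI : ¬ BddAbove {a : ℝ | ∀ᶠ ε in LL, a ≤ f ε}) :
    ¬ BddAbove {a : ℝ | ∀ᶠ ε in LL, a ≤ g ε} := by
  rw [not_bddAbove_iff] at hI ⊢
  intro M
  obtain ⟨a, ha, haM⟩ := hI (2*M+1)
  refine ⟨(a-1)/2, ?_, by linarith⟩
  have key : ∀ᶠ ε in LL, (a-1)/2 ≤ g (σ ε) := by
    filter_upwards [H 1 one_pos, ha] with ε e1 e2
    nlinarith
  have h5 := hτ'.eventually key
  simpa only [hid, Set.mem_setOf_eq] using h5

end master

lemma ev_pos : ∀ᶠ ε in LL, 0 < ε :=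
  eventually_mem_nhdsWithin.mono (fun _ h => h)

lemma ev_lt {δ : ℝ} (hδ : 0 < δ) : ∀ᶠ ε in LL, ε < δ :=
  Filter.Eventually.filter_mono nhdsWithin_le_nhds
    (eventually_of_mem (Iio_mem_nhds hδ) (fun _ hx => hx))

lemma ev_log (B : ℝ) : ∀ᶠ ε in LL, B ≤ Real.log (1/ε) := by
  filter_upwards [ev_pos, ev_lt (Real.exp_pos (-B))] with ε h1 h2
  have h3 : Real.log ε ≤ -B := by
    calc Real.log ε ≤ Real.log (Real.exp (-B)) := Real.log_le_log h1 h2.le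
    _ = -B := Real.log_exp _
  rw [one_div, Real.log_inv]; linarith

lemma tendsto_div_c {c : ℝ} (hc : 0 < c) : Tendsto (fun ε : ℝ => ε / c) LL LL := by
  apply tendsto_nhdsWithin_of_tendsto_nhds_of_eventually_within
  · have h : Tendsto (fun ε : ℝ => ε / c) (nhds 0) (nhds (0/c)) := tendsto_id.div_const c
    rw [zero_div] at h
    exact h.mono_left nhdsWithin_le_nhds
  · filter_upwards [ev_pos] with ε hε
    exact div_pos hε hc

lemma tendsto_mul_c {c : ℝ} (hc : 0 < c) : Tendsto (fun u : ℝ => c * u) LL LL := by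
  apply tendsto_nhdsWithin_of_tendsto_nhds_of_eventually_within
  · have h : Tendsto (fun u : ℝ => c * u) (nhds 0) (nhds (c * 0)) :=
      (tendsto_id.const_mul c)
    rw [mul_zero] at h
    exact h.mono_left nhdsWithin_le_nhds
  · filter_upwards [ev_pos] with ε hε
    exact mul_pos hc hε

lemma calc_key {X Y D E lC lc l2 ρ : ℝ} (hD : 0 < D) (hE : E = D + lc)
    (hlc : l2 ≤ lc) (hl2 : 0 < l2) (hlC : 0 ≤ lC)
    (hX : X ≤ lC + Y) (hY : -l2 ≤ Y) (hρ : 0 < ρ)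
    (h1 : 2*lC ≤ ρ*D) (h2 : lc ≤ ρ*D) (h3 : 2*l2 ≤ D) :
    X/D ≤ (1+ρ)*(Y/E) + ρ := by
  have hE0 : 0 < E := by linarith
  have hDE : D ≤ E := by linarith
  have hlCD : lC/D ≤ ρ/2 := by rw [div_le_iff₀ hD]; linarith
  have hXD : X/D ≤ lC/D + Y/D := by
    rw [← add_div]
    gcongr
  set Z := Y/E with hZdef
  have hYZ : Y = Z*E := by rw [hZdef, div_mul_cancel₀]; exact hE0.ne'
  rcases le_or_gt 0 Z with hZ0 | hZ0
  · have hED : E/D ≤ 1+ρ := by rw [div_le_iff₀ hD]; linarith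
    have hYD : Y/D = Z*(E/D) := by rw [hYZ, mul_div_assoc]
    have : Y/D ≤ Z*(1+ρ) := by
      rw [hYD]
      exact mul_le_mul_of_nonneg_left hED hZ0
    calc X/D ≤ lC/D + Y/D := hXD
      _ ≤ ρ/2 + Z*(1+ρ) := by linarith
      _ ≤ (1+ρ)*Z + ρ := by ring_nf; linarith
  · have hYneg : Y < 0 := by nlinarith
    have hYDZ : Y/D ≤ Z := by
      rw [hZdef, div_le_div_iff₀ hD hE0]
      nlinarith
    have hZhalf : -(1/2) ≤ Z := by
      rw [hZdef, le_div_iff₀ hE0]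
      nlinarith
    calc X/D ≤ lC/D + Y/D := hXD
      _ ≤ ρ/2 + Z := by linarith
      _ ≤ (1+ρ)*Z + ρ := by nlinarith

lemma ev_pos' : ∀ᶠ ε in LL, 0 < ε := eventually_mem_nhdsWithin.mono (fun _ h => h)

lemma ev_lt' {δ : ℝ} (hδ : 0 < δ) : ∀ᶠ ε in LL, ε < δ :=
  Filter.Eventually.filter_mono nhdsWithin_le_nhds
    (eventually_of_mem (Iio_mem_nhds hδ) (fun _ hx => hx))

lemma ev_log' (B : ℝ) : ∀ᶠ ε in LL, B ≤ Real.log (1/ε) := by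
  filter_upwards [ev_pos', ev_lt' (Real.exp_pos (-B))] with ε h1 h2
  have h3 : Real.log ε ≤ -B := by
    calc Real.log ε ≤ Real.log (Real.exp (-B)) := Real.log_le_log h1 h2.le
    _ = -B := Real.log_exp _
  rw [one_div, Real.log_inv]; linarith

lemma massage (F G : ℝ → ℝ) (c C δ : ℝ) (hc : 2 ≤ c) (hC : 1 ≤ C) (hδ : 0 < δ)
    (hF : ∀ ε, 0 < ε → ε < δ → 1/2 ≤ F ε)
    (hG : ∀ ε, 0 < ε → ε < δ → 1/2 ≤ G (ε/c))
    (hFG : ∀ ε, 0 < ε → ε < δ → F ε ≤ C * G (ε/c)) :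
    ∀ ρ > 0, ∀ᶠ ε in LL, Real.log (F ε) / Real.log (1/ε)
      ≤ (1+ρ) * (Real.log (G (ε/c)) / Real.log (1/(ε/c))) + ρ := by
  intro ρ hρ
  have hc0 : 0 < c := by linarith
  have hlC : 0 ≤ Real.log C := Real.log_nonneg hC
  have hl2 : 0 < Real.log 2 := Real.log_pos (by norm_num)
  have hlc : Real.log 2 ≤ Real.log c := Real.log_le_log (by norm_num) hc
  set B := max (max (2*Real.log C/ρ) (Real.log c/ρ)) (2*Real.log 2) + 1 with hB
  filter_upwards [ev_pos', ev_lt' (lt_min_iff.mpr ⟨hδ, one_pos⟩ : (0:ℝ) < min δ 1),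
    ev_log' B] with ε hε1 hε2 hε3
  have hεδ : ε < δ := lt_of_lt_of_le hε2 (min_le_left _ _)
  have hε1' : ε < 1 := lt_of_lt_of_le hε2 (min_le_right _ _)
  have hD : 0 < Real.log (1/ε) := Real.log_pos (by rw [lt_div_iff₀ hε1]; linarith)
  set D := Real.log (1/ε) with hDdef
  have hBD : B ≤ D := hε3
  have hE : Real.log (1/(ε/c)) = D + Real.log c := by
    rw [one_div_div, Real.log_div hc0.ne' hε1.ne', hDdef, one_div, Real.log_inv]
    ring
  have hFpos : (0:ℝ) < F ε := lt_of_lt_of_le (by norm_num) (hF ε hε1 hεδ)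
  have hGpos : (0:ℝ) < G (ε/c) := lt_of_lt_of_le (by norm_num) (hG ε hε1 hεδ)
  have hX : Real.log (F ε) ≤ Real.log C + Real.log (G (ε/c)) := by
    rw [← Real.log_mul (by linarith) hGpos.ne']
    exact Real.log_le_log hFpos (hFG ε hε1 hεδ)
  have hY : -Real.log 2 ≤ Real.log (G (ε/c)) := by
    have := Real.log_le_log (by norm_num : (0:ℝ) < 1/2) (hG ε hε1 hεδ)
    rwa [one_div, Real.log_inv] at this
  have hmax1 : 2*Real.log C/ρ ≤ D := by
    calc 2*Real.log C/ρ ≤ max (max (2*Real.log C/ρ) (Real.log c/ρ)) (2*Real.log 2) :=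
        le_max_of_le_left (le_max_left _ _)
      _ ≤ B := by rw [hB]; linarith
      _ ≤ D := hBD
  have hmax2 : Real.log c/ρ ≤ D := by
    calc Real.log c/ρ ≤ max (max (2*Real.log C/ρ) (Real.log c/ρ)) (2*Real.log 2) :=
        le_max_of_le_left (le_max_right _ _)
      _ ≤ B := by rw [hB]; linarith
      _ ≤ D := hBD
  have hmax3 : 2*Real.log 2 ≤ D := by
    calc 2*Real.log 2 ≤ max (max (2*Real.log C/ρ) (Real.log c/ρ)) (2*Real.log 2) :=
        le_max_right _ _
      _ ≤ B := by rw [hB]; linarith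
      _ ≤ D := hBD
  have h1 : 2*Real.log C ≤ ρ*D := by
    rw [div_le_iff₀ hρ] at hmax1; linarith [hmax1]
  have h2 : Real.log c ≤ ρ*D := by
    rw [div_le_iff₀ hρ] at hmax2; linarith [hmax2]
  exact calc_key hD hE hlc hl2 hlC hX hY hρ h1 h2 hmax3

lemma ev_nonneg (F : ℝ → ℝ) (δ : ℝ) (hδ : 0 < δ)
    (hF : ∀ ε, 0 < ε → ε < δ → 1/2 ≤ F ε) :
    ∀ ρ > 0, ∀ᶠ ε in LL, -ρ ≤ Real.log (F ε) / Real.log (1/ε) := by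
  intro ρ hρ
  filter_upwards [ev_pos', ev_lt' (lt_min_iff.mpr ⟨hδ, one_pos⟩ : (0:ℝ) < min δ 1),
    ev_log' (Real.log 2/ρ)] with ε h1 h2 h3
  have hεδ : ε < δ := lt_of_lt_of_le h2 (min_le_left _ _)
  have hε1 : ε < 1 := lt_of_lt_of_le h2 (min_le_right _ _)
  have hD : 0 < Real.log (1/ε) := Real.log_pos (by rw [lt_div_iff₀ h1]; linarith)
  have hX : -Real.log 2 ≤ Real.log (F ε) := by
    have := Real.log_le_log (by norm_num : (0:ℝ) < 1/2) (hF ε h1 hεδ)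
    rwa [one_div, Real.log_inv] at this
  have s1 : -Real.log 2/Real.log (1/ε) ≤ Real.log (F ε)/Real.log (1/ε) := by gcongr
  have s2 : Real.log 2 / Real.log (1/ε) ≤ ρ := by
    rw [div_le_iff₀ hD]
    rw [div_le_iff₀ hρ] at h3
    nlinarith
  calc -ρ ≤ -(Real.log 2/Real.log (1/ε)) := by linarith
    _ = -Real.log 2/Real.log (1/ε) := by rw [neg_div]
    _ ≤ _ := s1


/-! ### Main theorem -/

/-- The Diophantine dimensions of the family of integer solution sets of
`|Aq − θ|_m ≤ ε` coincide with those of the extended almost periodic function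
`φ̂(t) = Ât = (t, At) mod ℤ^(n+m)`. -/
theorem discrete_eq_continuous_dioDim (m n : ℕ) (hm : 0 < m) (hn : 0 < n)
    (A : Matrix (Fin m) (Fin n) ℝ) (θ : Torus m)
    (hθ : θ ∈ closure {x : Torus m | ∃ q : Fin n → ℤ,
      x = toTorus (A.mulVec fun j => (q j : ℝ))}) :
    Filter.limsup
        (fun ε : ℝ => Real.log (matInclLen A θ ε) / Real.log (1 / ε))
        (nhdsWithin 0 (Set.Ioi 0)) =
      Filter.limsup
        (fun ε : ℝ => Real.log
          (inclLen (fun t : Fin n → ℝ => toTorus (Fin.append t (A.mulVec t))) ε) /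
            Real.log (1 / ε))
        (nhdsWithin 0 (Set.Ioi 0)) ∧
    Filter.liminf
        (fun ε : ℝ => Real.log (matInclLen A θ ε) / Real.log (1 / ε))
        (nhdsWithin 0 (Set.Ioi 0)) =
      Filter.liminf
        (fun ε : ℝ => Real.log
          (inclLen (fun t : Fin n → ℝ => toTorus (Fin.append t (A.mulVec t))) ε) /
            Real.log (1 / ε))
        (nhdsWithin 0 (Set.Ioi 0)) := by
  have hθ' : thetaHyp A θ := hθ
  set F : ℝ → ℝ := fun ε => matInclLen A θ ε with hFdef
  set G : ℝ → ℝ := fun ε => inclLen (phihat A) ε with hGdef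
  set c : ℝ := Kbound A + 2 with hcdef
  have hK0 : 0 ≤ Kbound A := Kbound_nonneg A
  have hc2 : 2 ≤ c := by rw [hcdef]; linarith
  have hc0 : 0 < c := by linarith
  -- positivity facts
  have hF1 : ∀ ε, 0 < ε → 1 ≤ F ε := fun ε hε => F_ge_one A θ hn hθ' hε
  have hGge : ∀ ε, 0 < ε → 1 - 2*ε ≤ G ε := fun ε hε => G_ge A θ hn hθ' hε
  -- massage hypotheses, direction 1 : F ε ≤ 2 * G (ε/c)
  have hδ1 : (0:ℝ) < min (c/8) (1/4) := lt_min (by linarith) (by norm_num)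
  have m1F : ∀ ε, 0 < ε → ε < min (c/8) (1/4) → 1/2 ≤ F ε := by
    intro ε h1 _; linarith [hF1 ε h1]
  have m1G : ∀ ε, 0 < ε → ε < min (c/8) (1/4) → 1/2 ≤ G (ε/c) := by
    intro ε h1 h2
    have hεc : ε/c < 1/8 := by
      rw [div_lt_iff₀ hc0]
      have := lt_of_lt_of_le h2 (min_le_left _ _)
      linarith [this]
    have := hGge (ε/c) (div_pos h1 hc0)
    linarith
  have m1FG : ∀ ε, 0 < ε → ε < min (c/8) (1/4) → F ε ≤ 2 * G (ε/c) := by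
    intro ε h1 h2
    have hεc0 : 0 < ε/c := div_pos h1 hc0
    have key := F_le_G A θ hn hθ' hεc0
    rw [← hcdef] at key
    rw [mul_div_cancel₀ ε hc0.ne'] at key
    have hεc : ε/c < 1/8 := by
      rw [div_lt_iff₀ hc0]
      have := lt_of_lt_of_le h2 (min_le_left _ _)
      linarith [this]
    have hg := hGge (ε/c) hεc0
    have : F ε ≤ G (ε/c) + 2*(ε/c) := key
    nlinarith
  -- massage hypotheses, direction 2 : G ε ≤ 1 * F (ε/c)
  have m2F : ∀ ε, 0 < ε → ε < (1:ℝ)/4 → 1/2 ≤ G ε := by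
    intro ε h1 h2; linarith [hGge ε h1]
  have m2G : ∀ ε, 0 < ε → ε < (1:ℝ)/4 → 1/2 ≤ F (ε/c) := by
    intro ε h1 _; linarith [hF1 (ε/c) (div_pos h1 hc0)]
  have m2FG : ∀ ε, 0 < ε → ε < (1:ℝ)/4 → G ε ≤ 1 * F (ε/c) := by
    intro ε h1 _
    have key := G_le_F A θ hn hθ' (half_pos h1)
    rw [show 2 * (ε/2) = ε by ring] at key
    have hmono : F (ε/2) ≤ F (ε/c) :=
      F_antitone A θ hθ' (div_pos h1 hc0)
        (div_le_div_of_nonneg_left h1.le (by norm_num) hc2)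
    rw [one_mul]
    exact key.trans hmono
  -- the ratio functions
  set fF : ℝ → ℝ := fun ε => Real.log (F ε) / Real.log (1/ε) with hfFdef
  set fG : ℝ → ℝ := fun ε => Real.log (G ε) / Real.log (1/ε) with hfGdef
  have H1 : Hcomp fF fG (fun ε => ε / c) := by
    intro ρ hρ
    exact massage F G c 2 (min (c/8) (1/4)) hc2 (by norm_num) hδ1 m1F m1G m1FG ρ hρ
  have H2 : Hcomp fG fF (fun ε => ε / c) := by
    intro ρ hρ
    exact massage G F c 1 (1/4) hc2 le_rfl (by norm_num) m2F m2G m2FG ρ hρ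
  have hfF : ∀ ρ > 0, ∀ᶠ ε in LL, -ρ ≤ fF ε :=
    ev_nonneg F (min (c/8) (1/4)) hδ1 m1F
  have hfG : ∀ ρ > 0, ∀ᶠ ε in LL, -ρ ≤ fG ε :=
    ev_nonneg G (1/4) (by norm_num) m2F
  have hσ : Filter.Tendsto (fun ε : ℝ => ε / c) LL LL := tendsto_div_c hc0
  have hτ' : Filter.Tendsto (fun u : ℝ => c * u) LL LL := tendsto_mul_c hc0
  have hid : ∀ u : ℝ, (fun ε : ℝ => ε / c) ((fun u : ℝ => c * u) u) = u := by
    intro u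
    simp only
    rw [mul_comm, mul_div_assoc, div_self hc0.ne', mul_one]
  constructor
  · -- limsup
    show Filter.limsup fF LL = Filter.limsup fG LL
    by_cases hbd : ∃ b, ∀ᶠ ε in LL, fG ε ≤ b
    · have hbdF : ∃ b, ∀ᶠ ε in LL, fF ε ≤ b := S_transfer hσ H1 hbd
      exact le_antisymm (master_limsup_le hσ hfF hfG H1 hbd)
        (master_limsup_le hσ hfG hfF H2 hbdF)
    · have hbdF : ¬ ∃ b, ∀ᶠ ε in LL, fF ε ≤ b := fun h => hbd (S_transfer hσ H2 h)
      rw [Filter.limsup_eq, Filter.limsup_eq]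
      have e1 : {a : ℝ | ∀ᶠ ε in LL, fF ε ≤ a} = ∅ := by
        rw [Set.eq_empty_iff_forall_notMem]
        exact fun b hb => hbdF ⟨b, hb⟩
      have e2 : {a : ℝ | ∀ᶠ ε in LL, fG ε ≤ a} = ∅ := by
        rw [Set.eq_empty_iff_forall_notMem]
        exact fun b hb => hbd ⟨b, hb⟩
      rw [e1, e2]
  · -- liminf
    show Filter.liminf fF LL = Filter.liminf fG LL
    by_cases hbd : BddAbove {a : ℝ | ∀ᶠ ε in LL, a ≤ fG ε}
    · have hbdF : BddAbove {a : ℝ | ∀ᶠ ε in LL, a ≤ fF ε} := by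
        by_contra h
        exact (I_transfer hτ' hid H1 h) hbd
      exact le_antisymm (master_liminf_le hτ' hid hfF hfG H1 hbd)
        (master_liminf_le hτ' hid hfG hfF H2 hbdF)
    · have hbdF : ¬ BddAbove {a : ℝ | ∀ᶠ ε in LL, a ≤ fF ε} := by
        exact I_transfer hτ' hid H2 hbd
      rw [Filter.liminf_eq, Filter.liminf_eq,
        Real.sSup_of_not_bddAbove hbdF, Real.sSup_of_not_bddAbove hbd]
end
end
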